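/- arXiv:2601.02100 — 15 statements merged into one kernel-verified Lean document; each statement's English description precedes it below -/
import Mathlib

section
/- Let S be a subsemigroup of the bicyclic monoid C(p,q) (i.e., a subset of ℕ × ℕ closed under the bicyclic multiplication) such that the set {k ∈ ℕ : (k,k) ∈ S} of idempotents of S is infinite. Then every Hausdorff shift-continuous topology on S (i.e., every Hausdorff topology on S making all left translations x ↦ s·x and all right translations x ↦ x·s continuous) is the discrete topology. -/
/-- The bicyclic monoid realized on ℕ × ℕ, where `(k, l)` represents `q^k p^l`:
`(k,l)·(m,n) = (k + m − min(l,m), n + l − min(l,m))`. -/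
def bmul (x y : ℕ × ℕ) : ℕ × ℕ :=
  (x.1 + y.1 - min x.2 y.1, y.2 + x.2 - min x.2 y.1)

/-- If a subsemigroup `S` of the bicyclic monoid contains infinitely many idempotents,
then every Hausdorff shift-continuous topology on `S` is discrete. -/
theorem discrete_of_shift_continuous_of_infinite_idempotents
    (S : Set (ℕ × ℕ))
    (hS : ∀ x ∈ S, ∀ y ∈ S, bmul x y ∈ S)
    (hE : {k : ℕ | (k, k) ∈ S}.Infinite)
    (t : TopologicalSpace S)
    (ht2 : @T2Space S t)
    (hleft : ∀ s : S, @Continuous S S t t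
      (fun x => ⟨bmul (s : ℕ × ℕ) (x : ℕ × ℕ), hS _ s.2 _ x.2⟩))
    (hright : ∀ s : S, @Continuous S S t t
      (fun x => ⟨bmul (x : ℕ × ℕ) (s : ℕ × ℕ), hS _ x.2 _ s.2⟩)) :
    t = ⊥ := by
  letI := t
  haveI : T2Space S := ht2
  apply eq_bot_of_singletons_open
  intro x
  -- pick a large idempotent
  obtain ⟨k, hkS, hk⟩ := hE.exists_gt (max (x : ℕ × ℕ).1 (x : ℕ × ℕ).2)
  set e : S := ⟨(k, k), hkS⟩ with he
  -- the equalizer of left translation by e with the identity is {y | k ≤ y.1}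
  have hC1 : IsClosed {y : S | k ≤ (y : ℕ × ℕ).1} := by
    have h1 : {y : S | k ≤ (y : ℕ × ℕ).1} =
        {y : S | (⟨bmul (e : ℕ × ℕ) (y : ℕ × ℕ), hS _ e.2 _ y.2⟩ : S) = y} := by
      ext y
      simp only [Set.mem_setOf_eq, Subtype.ext_iff, bmul, Prod.ext_iff, he]
      constructor
      · intro h; constructor <;> omega
      · intro ⟨h1, h2⟩; omega
    rw [h1]
    exact isClosed_eq (hleft e) continuous_id
  have hC2 : IsClosed {y : S | k ≤ (y : ℕ × ℕ).2} := by
    have h2 : {y : S | k ≤ (y : ℕ × ℕ).2} =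
        {y : S | (⟨bmul (y : ℕ × ℕ) (e : ℕ × ℕ), hS _ y.2 _ e.2⟩ : S) = y} := by
      ext y
      simp only [Set.mem_setOf_eq, Subtype.ext_iff, bmul, Prod.ext_iff, he]
      constructor
      · intro h; constructor <;> omega
      · intro ⟨h1, h2⟩; omega
    rw [h2]
    exact isClosed_eq (hright e) continuous_id
  -- hence the "box" below (k,k) is open
  have hU : IsOpen {y : S | (y : ℕ × ℕ).1 < k ∧ (y : ℕ × ℕ).2 < k} := by
    have : {y : S | (y : ℕ × ℕ).1 < k ∧ (y : ℕ × ℕ).2 < k} =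
        {y : S | k ≤ (y : ℕ × ℕ).1}ᶜ ∩ {y : S | k ≤ (y : ℕ × ℕ).2}ᶜ := by
      ext y
      simp [not_le]
    rw [this]
    exact (hC1.isOpen_compl).inter (hC2.isOpen_compl)
  set U : Set S := {y : S | (y : ℕ × ℕ).1 < k ∧ (y : ℕ × ℕ).2 < k} with hUdef
  -- the box is finite
  have hUfin : U.Finite := by
    have : U = (Subtype.val : S → ℕ × ℕ) ⁻¹' (Set.Iio k ×ˢ Set.Iio k) := by
      ext y; simp [hUdef, Set.mem_prod]
    rw [this]
    exact Set.Finite.preimage (Subtype.val_injective.injOn)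
      ((Set.finite_Iio k).prod (Set.finite_Iio k))
  have hxU : x ∈ U := by
    constructor
    · exact lt_of_le_of_lt (le_max_left _ _) hk
    · exact lt_of_le_of_lt (le_max_right _ _) hk
  -- {x} = U \ (U \ {x}), giving openness
  have hsing : ({x} : Set S) = U \ (U \ {x}) := by
    ext y
    constructor
    · rintro rfl
      exact ⟨hxU, fun h => h.2 rfl⟩
    · rintro ⟨hyU, hy⟩
      by_contra hne
      exact hy ⟨hyU, hne⟩
  rw [hsing]
  exact hU.sdiff ((hUfin.diff).isClosed)
end

section
/- Let S be a subsemigroup of the bicyclic monoid C(p,q) that is closed under the inversion map (k,l) ↦ (l,k) (i.e., S is an inverse subsemigroup). Then every Hausdorff shift-continuous topology on S is the discrete topology. -/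
/-- If `S` is an inverse subsemigroup of the bicyclic monoid (i.e. a subsemigroup closed
under the inversion `(k,l) ↦ (l,k)`), then every Hausdorff shift-continuous topology on
`S` is discrete. -/
theorem discrete_of_shift_continuous_of_inverse_subsemigroup
    (S : Set (ℕ × ℕ))
    (hS : ∀ x ∈ S, ∀ y ∈ S, bmul x y ∈ S)
    (hinv : ∀ x ∈ S, (Prod.snd x, Prod.fst x) ∈ S)
    (t : TopologicalSpace S)
    (ht2 : @T2Space S t)
    (hleft : ∀ s : S, @Continuous S S t t
      (fun x => ⟨bmul (s : ℕ × ℕ) (x : ℕ × ℕ), hS _ s.2 _ x.2⟩))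
    (hright : ∀ s : S, @Continuous S S t t
      (fun x => ⟨bmul (x : ℕ × ℕ) (s : ℕ × ℕ), hS _ x.2 _ s.2⟩)) :
    t = ⊥ := by
  haveI := ht2
  -- every element generates the idempotents on its coordinates
  have hidem : ∀ m n : ℕ, (m, n) ∈ S → (m, m) ∈ S ∧ (n, n) ∈ S := by
    intro m n h
    have h' : (n, m) ∈ S := hinv _ h
    have h1 : bmul (m, n) (n, m) ∈ S := hS _ h _ h'
    have h2 : bmul (n, m) (m, n) ∈ S := hS _ h' _ h
    simp [bmul] at h1 h2
    exact ⟨h1, h2⟩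
  by_cases hub : ∀ N : ℕ, ∃ a, N ≤ a ∧ (a, a) ∈ S
  · -- idempotents unbounded: every singleton is open
    refine eq_bot_of_singletons_open ?_
    rintro ⟨⟨k, l⟩, hx⟩
    obtain ⟨a, ha, haS⟩ := hub (max k l + 1)
    -- the set {y | y.1 < a} is open
    have hopen1 : IsOpen {y : S | (y : ℕ × ℕ).1 < a} := by
      have hcl : IsClosed {y : S |
          (⟨bmul ((a, a) : ℕ × ℕ) (y : ℕ × ℕ), hS _ haS _ y.2⟩ : S) = y} :=
        isClosed_eq (hleft ⟨(a, a), haS⟩) continuous_id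
      have : {y : S | (y : ℕ × ℕ).1 < a} = {y : S |
          (⟨bmul ((a, a) : ℕ × ℕ) (y : ℕ × ℕ), hS _ haS _ y.2⟩ : S) = y}ᶜ := by
        ext ⟨⟨m, n⟩, hy⟩
        simp only [Set.mem_setOf_eq, Set.mem_compl_iff, Subtype.mk.injEq, bmul, Prod.mk.injEq]
        constructor
        · intro h hc; omega
        · intro h
          by_contra hc
          exact h ⟨by omega, by omega⟩
      rw [this]
      exact hcl.isOpen_compl
    have hopen2 : IsOpen {y : S | (y : ℕ × ℕ).2 < a} := by
      have hcl : IsClosed {y : S |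
          (⟨bmul (y : ℕ × ℕ) ((a, a) : ℕ × ℕ), hS _ y.2 _ haS⟩ : S) = y} :=
        isClosed_eq (hright ⟨(a, a), haS⟩) continuous_id
      have : {y : S | (y : ℕ × ℕ).2 < a} = {y : S |
          (⟨bmul (y : ℕ × ℕ) ((a, a) : ℕ × ℕ), hS _ y.2 _ haS⟩ : S) = y}ᶜ := by
        ext ⟨⟨m, n⟩, hy⟩
        simp only [Set.mem_setOf_eq, Set.mem_compl_iff, Subtype.mk.injEq, bmul, Prod.mk.injEq]
        constructor
        · intro h hc; omega
        · intro h
          by_contra hc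
          exact h ⟨by omega, by omega⟩
      rw [this]
      exact hcl.isOpen_compl
    set U : Set S := {y : S | (y : ℕ × ℕ).1 < a} ∩ {y : S | (y : ℕ × ℕ).2 < a} with hU
    have hUopen : IsOpen U := hopen1.inter hopen2
    have hxU : (⟨(k, l), hx⟩ : S) ∈ U := ⟨by simpa using by omega, by simpa using by omega⟩
    have hUfin : U.Finite := by
      have : U ⊆ Subtype.val ⁻¹' (Set.Iio a ×ˢ Set.Iio a) := by
        rintro ⟨⟨m, n⟩, hy⟩ ⟨h1, h2⟩
        exact ⟨h1, h2⟩
      exact Set.Finite.subset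
        (((Set.finite_Iio a).prod (Set.finite_Iio a)).preimage Subtype.val_injective.injOn) this
    have hdiff : IsClosed (U \ {(⟨(k, l), hx⟩ : S)}) :=
      (hUfin.subset Set.diff_subset).isClosed
    have : ({(⟨(k, l), hx⟩ : S)} : Set S) = U ∩ (U \ {(⟨(k, l), hx⟩ : S)})ᶜ := by
      ext y
      simp only [Set.mem_singleton_iff, Set.mem_inter_iff, Set.mem_compl_iff, Set.mem_diff]
      constructor
      · rintro rfl; exact ⟨hxU, fun h => h.2 rfl⟩
      · rintro ⟨hy, hy2⟩
        by_contra hne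
        exact hy2 ⟨hy, hne⟩
    rw [this]
    exact hUopen.inter hdiff.isOpen_compl
  · -- idempotents bounded: S is finite, and finite T1 spaces are discrete
    push_neg at hub
    obtain ⟨N, hN⟩ := hub
    have hsub : S ⊆ Set.Iio N ×ˢ Set.Iio N := by
      rintro ⟨m, n⟩ hmn
      obtain ⟨h1, h2⟩ := hidem m n hmn
      constructor
      · by_contra h
        simp only [Set.mem_Iio, not_lt] at h
        exact hN m h h1
      · by_contra h
        simp only [Set.mem_Iio, not_lt] at h
        exact hN n h h2
    have hfin : S.Finite :=
      Set.Finite.subset ((Set.finite_Iio N).prod (Set.finite_Iio N)) hsub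
    haveI : Finite S := hfin.to_subtype
    haveI : DiscreteTopology S := Finite.instDiscreteTopology
    exact DiscreteTopology.eq_bot
end

section
/- Let S be an infinite subsemigroup of the bicyclic monoid C(a,b) such that the set {k ∈ ℕ : (k,k) ∈ S} of idempotents of S is finite. Then either S ⊆ C₊(a,b) or S ⊆ C₋(a,b). -/
/-- The subsemigroup `C₊(a,b) = {(i,j) : i ≤ j}` of the bicyclic monoid. -/
def Cplus : Set (ℕ × ℕ) := {x | x.1 ≤ x.2}

/-- The subsemigroup `C₋(a,b) = {(i,j) : i ≥ j}` of the bicyclic monoid. -/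
def Cminus : Set (ℕ × ℕ) := {x | x.2 ≤ x.1}

/-- If an infinite subsemigroup `S` of the bicyclic monoid contains only finitely many
idempotents, then either `S ⊆ C₊(a,b)` or `S ⊆ C₋(a,b)`. -/
theorem subset_Cplus_or_subset_Cminus_of_finite_idempotents
    (S : Set (ℕ × ℕ))
    (hinf : S.Infinite)
    (hS : ∀ x ∈ S, ∀ y ∈ S, bmul x y ∈ S)
    (hE : {k : ℕ | (k, k) ∈ S}.Finite) :
    S ⊆ Cplus ∨ S ⊆ Cminus := by
  by_contra h
  push_neg at h
  obtain ⟨h1, h2⟩ := h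
  obtain ⟨x, hxS, hx⟩ := Set.not_subset.mp h1
  obtain ⟨y, hyS, hy⟩ := Set.not_subset.mp h2
  simp only [Cplus, Cminus, Set.mem_setOf_eq, not_le] at hx hy
  obtain ⟨a, b⟩ := x
  obtain ⟨c, d⟩ := y
  simp only at hx hy
  -- a = b + (Δ+1), d = c + (δ+1)
  obtain ⟨Δ, rfl⟩ : ∃ Δ, a = b + (Δ + 1) := ⟨a - b - 1, by omega⟩
  obtain ⟨δ, rfl⟩ : ∃ δ, d = c + (δ + 1) := ⟨d - c - 1, by omega⟩
  -- powers of (b+(Δ+1), b): (b + (n+1)*(Δ+1), b) ∈ S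
  have pow1 : ∀ n : ℕ, (b + (n + 1) * (Δ + 1), b) ∈ S := by
    intro n
    induction n with
    | zero =>
      have : (b + (0 + 1) * (Δ + 1), b) = (b + (Δ + 1), b) := by
        simp
      rw [this]; exact hxS
    | succ n ih =>
      have h2 := hS _ ih _ hxS
      have heq : bmul (b + (n + 1) * (Δ + 1), b) (b + (Δ + 1), b)
          = (b + (n + 1 + 1) * (Δ + 1), b) := by
        simp only [bmul]
        have hmin : min b (b + (Δ + 1)) = b := by omega
        rw [hmin]
        have e1 : (n + 1 + 1) * (Δ + 1) = (n + 1) * (Δ + 1) + (Δ + 1) := by ring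
        simp only [Prod.mk.injEq]
        omega
      rw [heq] at h2
      exact h2
  -- powers of (c, c+(δ+1)): (c, c + (n+1)*(δ+1)) ∈ S
  have pow2 : ∀ n : ℕ, (c, c + (n + 1) * (δ + 1)) ∈ S := by
    intro n
    induction n with
    | zero =>
      have : (c, c + (0 + 1) * (δ + 1)) = (c, c + (δ + 1)) := by
        simp
      rw [this]; exact hyS
    | succ n ih =>
      have h2 := hS _ hyS _ ih
      have heq : bmul (c, c + (δ + 1)) (c, c + (n + 1) * (δ + 1))
          = (c, c + (n + 1 + 1) * (δ + 1)) := by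
        simp only [bmul]
        have hmin : min (c + (δ + 1)) c = c := by omega
        rw [hmin]
        have e1 : (n + 1 + 1) * (δ + 1) = (n + 1) * (δ + 1) + (δ + 1) := by ring
        simp only [Prod.mk.injEq]
        omega
      rw [heq] at h2
      exact h2
  -- infinitely many idempotents
  have heb : min b c ≤ b := min_le_left _ _
  have idem : ∀ k : ℕ,
      (b - min b c) + c + (k + 1) * ((δ + 1) * (Δ + 1)) ∈ {k : ℕ | (k, k) ∈ S} := by
    intro k
    have hn : 1 ≤ (k + 1) * (δ + 1) := Nat.one_le_iff_ne_zero.mpr (by positivity)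
    have hm : 1 ≤ (k + 1) * (Δ + 1) := Nat.one_le_iff_ne_zero.mpr (by positivity)
    have hp1 := pow1 ((k + 1) * (δ + 1) - 1)
    have hp2 := pow2 ((k + 1) * (Δ + 1) - 1)
    rw [show (k + 1) * (δ + 1) - 1 + 1 = (k + 1) * (δ + 1) by omega] at hp1
    rw [show (k + 1) * (Δ + 1) - 1 + 1 = (k + 1) * (Δ + 1) by omega] at hp2
    have h3 := hS _ hp1 _ hp2
    have heq : bmul (b + (k + 1) * (δ + 1) * (Δ + 1), b)
        (c, c + (k + 1) * (Δ + 1) * (δ + 1)) =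
        ((b - min b c) + c + (k + 1) * ((δ + 1) * (Δ + 1)),
         (b - min b c) + c + (k + 1) * ((δ + 1) * (Δ + 1))) := by
      simp only [bmul]
      have e1 : (k + 1) * ((δ + 1) * (Δ + 1)) = (k + 1) * (δ + 1) * (Δ + 1) := by ring
      have e2 : (k + 1) * ((δ + 1) * (Δ + 1)) = (k + 1) * (Δ + 1) * (δ + 1) := by ring
      simp only [Prod.mk.injEq]
      constructor
      · rw [e1]; omega
      · rw [e2]; omega
    rw [heq] at h3
    exact h3
  apply hE.not_infinite
  refine Set.infinite_of_injective_forall_mem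
    (f := fun k : ℕ => (b - min b c) + c + (k + 1) * ((δ + 1) * (Δ + 1))) ?_ idem
  intro k1 k2 hk
  simp only at hk
  have hD : 1 ≤ (δ + 1) * (Δ + 1) := Nat.one_le_iff_ne_zero.mpr (by positivity)
  have hmm : (k1 + 1) * ((δ + 1) * (Δ + 1)) = (k2 + 1) * ((δ + 1) * (Δ + 1)) := by omega
  have := Nat.eq_of_mul_eq_mul_right (by omega) hmm
  omega
end

section
/- Every Hausdorff right-continuous topology on the semigroup C₊(a,b) (i.e., every Hausdorff topology on C₊(a,b) making all left translations x ↦ s·x continuous) for which C₊(a,b) is a Baire space is the discrete topology. -/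
lemma Cplus.mul_mem {x y : ℕ × ℕ} (hx : x ∈ Cplus) (hy : y ∈ Cplus) :
    bmul x y ∈ Cplus := by
  simp only [Cplus, Set.mem_setOf_eq, bmul] at *
  omega

/-- Every Hausdorff right-continuous topology on `C₊(a,b)` (all left translations
continuous) which is a Baire space is discrete. -/
theorem Cplus_discrete_of_rightContinuous_of_baire
    (t : TopologicalSpace Cplus)
    (ht2 : @T2Space Cplus t)
    (hBaire : @BaireSpace Cplus t)
    (hleft : ∀ s : Cplus, @Continuous Cplus Cplus t t
      (fun x => ⟨bmul (s : ℕ × ℕ) (x : ℕ × ℕ), Cplus.mul_mem s.2 x.2⟩)) :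
    t = ⊥ := by
  letI := t
  haveI := ht2
  haveI := hBaire
  -- finite boxes in `Cplus` are finite
  have hbox : ∀ a b : ℕ, {x : Cplus | x.val.1 ≤ a ∧ x.val.2 ≤ b}.Finite := by
    intro a b
    have h1 : {z : ℕ × ℕ | z.1 ≤ a ∧ z.2 ≤ b}.Finite := by
      apply Set.Finite.subset (((Finset.range (a+1)) ×ˢ (Finset.range (b+1))).finite_toSet)
      intro z hz
      simp only [Finset.coe_product, Set.mem_prod, Finset.mem_coe, Finset.mem_range]
      simp only [Set.mem_setOf_eq] at hz
      omega
    have : {x : Cplus | x.val.1 ≤ a ∧ x.val.2 ≤ b}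
        = Subtype.val ⁻¹' {z : ℕ × ℕ | z.1 ≤ a ∧ z.2 ≤ b} := rfl
    rw [this]
    exact Set.Finite.preimage (Subtype.val_injective.injOn) h1
  -- in a countable T1 Baire space, every nonempty open set contains an isolated point
  have hiso : ∀ U : Set Cplus, IsOpen U → U.Nonempty →
      ∃ x ∈ U, IsOpen ({x} : Set Cplus) := by
    intro U hU hne
    by_contra h
    push_neg at h
    have hd : ∀ x : U, Dense (({(x : Cplus)}ᶜ) : Set Cplus) := fun x =>
      dense_compl_singleton_iff_not_open.mpr (h x x.2)
    have ho : ∀ x : U, IsOpen (({(x : Cplus)}ᶜ) : Set Cplus) := fun x =>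
      isOpen_compl_singleton
    have hdense : Dense (⋂ x : U, (({(x : Cplus)}ᶜ) : Set Cplus)) :=
      dense_iInter_of_isOpen ho hd
    have hEq : (⋂ x : U, (({(x : Cplus)}ᶜ) : Set Cplus)) = Uᶜ := by
      ext z
      simp only [Set.mem_iInter, Set.mem_compl_iff, Set.mem_singleton_iff]
      constructor
      · intro hz hzU
        exact hz ⟨z, hzU⟩ rfl
      · intro hz i hzi
        exact hz (by rw [hzi]; exact i.2)
    rw [hEq] at hdense
    obtain ⟨w, hw⟩ := hdense.inter_open_nonempty U hU hne
    exact hw.2 hw.1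
  -- every point of a finite open set is isolated
  have hfin : ∀ V : Set Cplus, IsOpen V → V.Finite → ∀ x ∈ V,
      IsOpen ({x} : Set Cplus) := by
    intro V hV hVfin x hx
    have h1 : IsClosed (V \ {x}) := (hVfin.subset Set.diff_subset).isClosed
    have h2 : IsOpen (V \ (V \ {x})) := hV.sdiff h1
    rwa [Set.diff_diff_cancel_left (Set.singleton_subset_iff.mpr hx)] at h2
  -- propagation of isolated points via left translations
  have hprop : ∀ p q : Cplus, IsOpen ({p} : Set Cplus) →
      q.val.2 ≤ p.val.2 → q.val.2 + p.val.1 ≤ p.val.2 + q.val.1 →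
      IsOpen ({q} : Set Cplus) := by
    intro p q hp hq2 hdef
    have hq12 : q.val.1 ≤ q.val.2 := q.2
    have hp12 : p.val.1 ≤ p.val.2 := p.2
    set l : ℕ := q.val.1 + (p.val.2 - q.val.2) with hl
    have hs : ((p.val.1, l) : ℕ × ℕ) ∈ Cplus := by
      simp only [Cplus, Set.mem_setOf_eq]
      omega
    set s : Cplus := ⟨(p.val.1, l), hs⟩ with hsdef
    set f : Cplus → Cplus :=
      (fun x => ⟨bmul (s : ℕ × ℕ) (x : ℕ × ℕ), Cplus.mul_mem s.2 x.2⟩) with hf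
    have hfc : Continuous f := hleft s
    have hD : IsOpen (f ⁻¹' {p}) := hp.preimage hfc
    have hqD : q ∈ f ⁻¹' {p} := by
      simp only [hf, Set.mem_preimage, Set.mem_singleton_iff]
      apply Subtype.ext
      show bmul (p.val.1, l) q.val = p.val
      simp only [bmul]
      have : min l q.val.1 = q.val.1 := by omega
      rw [this]
      have hpair : p.val = (p.val.1, p.val.2) := rfl
      rw [hpair, Prod.mk.injEq]
      exact ⟨by omega, by omega⟩
    have hDfin : (f ⁻¹' {p}).Finite := by
      apply Set.Finite.subset (hbox p.val.2 p.val.2)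
      intro x hxD
      have hx12 : x.val.1 ≤ x.val.2 := x.2
      have : bmul (p.val.1, l) x.val = p.val := by
        have := hxD
        simp only [hf, Set.mem_preimage, Set.mem_singleton_iff] at this
        exact congrArg Subtype.val this
      simp only [bmul] at this
      have h2 : x.val.2 + l - min l x.val.1 = p.val.2 := congrArg Prod.snd this
      simp only [Set.mem_setOf_eq]
      omega
    exact hfin _ hD hDfin q hqD
  -- column bound: every point has a neighborhood within its columns
  have hcol : ∀ y : Cplus, ∃ N : Set Cplus, IsOpen N ∧ y ∈ N ∧
      ∀ x ∈ N, x.val.1 ≤ y.val.1 := by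
    intro y
    set a : ℕ := y.val.1 with ha
    have hy12 : y.val.1 ≤ y.val.2 := y.2
    have hs : ((a + 1, a + 1) : ℕ × ℕ) ∈ Cplus := by
      simp only [Cplus, Set.mem_setOf_eq]
      omega
    set s : Cplus := ⟨(a + 1, a + 1), hs⟩ with hsdef
    set f : Cplus → Cplus :=
      (fun x => ⟨bmul (s : ℕ × ℕ) (x : ℕ × ℕ), Cplus.mul_mem s.2 x.2⟩) with hf
    have hfc : Continuous f := hleft s
    have hfy : (f y).val = (a + 1, y.val.2 + 1) := by
      show bmul (a + 1, a + 1) y.val = _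
      simp only [bmul]
      have : min (a + 1) y.val.1 = y.val.1 := by omega
      rw [this, Prod.mk.injEq]
      exact ⟨by omega, by omega⟩
    have hne : f y ≠ y := by
      intro hEq
      have hval : (f y).val = y.val := congrArg Subtype.val hEq
      rw [hfy] at hval
      have h1 : a + 1 = y.val.1 := congrArg Prod.fst hval
      omega
    obtain ⟨V, U, hV, hU, hfyV, hyU, hdisj⟩ := t2_separation hne
    refine ⟨U ∩ f ⁻¹' V, hU.inter (hV.preimage hfc), ⟨hyU, hfyV⟩, ?_⟩
    intro x hx
    by_contra hxa
    push_neg at hxa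
    have hx12 : x.val.1 ≤ x.val.2 := x.2
    have hfx : f x = x := by
      apply Subtype.ext
      show bmul (a + 1, a + 1) x.val = x.val
      simp only [bmul]
      have : min (a + 1) x.val.1 = a + 1 := by omega
      rw [this]
      have hpair : x.val = (x.val.1, x.val.2) := rfl
      conv_rhs => rw [hpair]
      rw [Prod.mk.injEq]
      exact ⟨by omega, by omega⟩
    have hxV : x ∈ V := by
      have := hx.2
      rwa [Set.mem_preimage, hfx] at this
    exact Set.disjoint_left.mp hdisj hxV hx.1
  -- main: every singleton is open
  apply eq_bot_of_singletons_open
  intro y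
  obtain ⟨N, hN, hyN, hNcol⟩ := hcol y
  set T : Set Cplus := {x | x.val.1 ≤ y.val.1 ∧ x.val.2 < y.val.2} with hT
  have hTfin : T.Finite := by
    apply Set.Finite.subset (hbox y.val.1 y.val.2)
    intro x hx
    simp only [hT, Set.mem_setOf_eq] at hx ⊢
    omega
  have hN' : IsOpen (N \ T) := hN.sdiff hTfin.isClosed
  have hyN' : y ∈ N \ T := by
    refine ⟨hyN, ?_⟩
    simp only [hT, Set.mem_setOf_eq]
    omega
  obtain ⟨p, hpN, hpiso⟩ := hiso _ hN' ⟨y, hyN'⟩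
  have h1 : p.val.1 ≤ y.val.1 := hNcol p hpN.1
  have h2 : y.val.2 ≤ p.val.2 := by
    by_contra hc
    exact hpN.2 ⟨h1, by omega⟩
  exact hprop p y hpiso h2 (by omega)
end

section
/- Every Hausdorff left-continuous topology on the semigroup C₋(a,b) (i.e., every Hausdorff topology on C₋(a,b) making all right translations x ↦ x·s continuous) for which C₋(a,b) is a Baire space is the discrete topology. -/
lemma Cminus.mul_mem {x y : ℕ × ℕ} (hx : x ∈ Cminus) (hy : y ∈ Cminus) :
    bmul x y ∈ Cminus := by
  simp only [Cminus, Set.mem_setOf_eq, bmul] at *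
  omega

/-- In a countable T1 Baire space, every nonempty open set contains an isolated point. -/
lemma exists_isolated_aux {X : Type*} [TopologicalSpace X] [T1Space X] [BaireSpace X]
    [Countable X] {U : Set X} (hU : IsOpen U) (hne : U.Nonempty) :
    ∃ x ∈ U, IsOpen ({x} : Set X) := by
  by_contra h
  push_neg at h
  have hd : Dense (⋂ x : U, ({(x : X)}ᶜ : Set X)) :=
    dense_iInter_of_isOpen (fun x => isClosed_singleton.isOpen_compl)
      (fun x => dense_compl_singleton_iff_not_open.2 (h x x.2))
  have heq : (⋂ x : U, ({(x : X)}ᶜ : Set X)) = Uᶜ := by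
    ext y
    simp only [Set.mem_iInter, Set.mem_compl_iff, Set.mem_singleton_iff]
    constructor
    · intro hy hyU
      exact hy ⟨y, hyU⟩ rfl
    · rintro hy ⟨x, hx⟩ rfl
      exact hy hx
  rw [heq] at hd
  obtain ⟨y, hy1, hy2⟩ := hd.inter_open_nonempty U hU hne
  exact hy2 hy1

/-- Every Hausdorff left-continuous topology on `C₋(a,b)` (all right translations
continuous) which is a Baire space is discrete. -/
theorem Cminus_discrete_of_leftContinuous_of_baire
    (t : TopologicalSpace Cminus)
    (ht2 : @T2Space Cminus t)
    (hBaire : @BaireSpace Cminus t)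
    (hright : ∀ s : Cminus, @Continuous Cminus Cminus t t
      (fun x => ⟨bmul (x : ℕ × ℕ) (s : ℕ × ℕ), Cminus.mul_mem x.2 s.2⟩)) :
    t = ⊥ := by
  letI := t
  -- finiteness of preimages of singletons under right translations
  have hfin : ∀ (s x₀ : Cminus),
      ((fun x : Cminus => (⟨bmul (x : ℕ × ℕ) (s : ℕ × ℕ), Cminus.mul_mem x.2 s.2⟩ : Cminus))
        ⁻¹' {x₀}).Finite := by
    intro s x₀
    apply Set.Finite.subset
      (Set.Finite.preimage (Set.injOn_of_injective Subtype.val_injective)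
        ((Set.finite_Iic (x₀ : ℕ × ℕ).1).prod (Set.finite_Iic ((s : ℕ × ℕ).1 + (x₀ : ℕ × ℕ).2))))
    intro x hx
    simp only [Set.mem_preimage, Set.mem_singleton_iff, Subtype.ext_iff, bmul,
      Prod.ext_iff] at hx
    simp only [Set.mem_preimage, Set.mem_prod, Set.mem_Iic]
    omega
  -- the sets {x | x.2 ≤ j} are open (complements of fixed-point sets of idempotents)
  have hopen2 : ∀ j : ℕ, IsOpen {x : Cminus | (x : ℕ × ℕ).2 ≤ j} := by
    intro j
    have he : ((j + 1, j + 1) : ℕ × ℕ) ∈ Cminus := Set.mem_setOf_eq.mpr (le_refl _)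
    have hcl : IsClosed {x : Cminus |
        (⟨bmul (x : ℕ × ℕ) ((j + 1, j + 1) : ℕ × ℕ),
          Cminus.mul_mem x.2 he⟩ : Cminus) = x} :=
      isClosed_eq (hright ⟨(j + 1, j + 1), he⟩) continuous_id
    have heq : {x : Cminus |
        (⟨bmul (x : ℕ × ℕ) ((j + 1, j + 1) : ℕ × ℕ),
          Cminus.mul_mem x.2 he⟩ : Cminus) = x}
        = {x : Cminus | (x : ℕ × ℕ).2 ≤ j}ᶜ := by
      ext x
      have hx := x.2
      simp only [Cminus, Set.mem_setOf_eq] at hx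
      simp only [Set.mem_setOf_eq, Subtype.ext_iff, bmul, Prod.ext_iff, Set.mem_compl_iff,
        not_le]
      omega
    rw [heq] at hcl
    simpa using hcl.isOpen_compl
  -- the sets {x | x.1 ≤ N} are finite, hence closed
  have hfin1 : ∀ N : ℕ, ({x : Cminus | (x : ℕ × ℕ).1 ≤ N}).Finite := by
    intro N
    apply Set.Finite.subset
      (Set.Finite.preimage (Set.injOn_of_injective Subtype.val_injective)
        ((Set.finite_Iic N).prod (Set.finite_Iic N)))
    intro x hx
    have hx2 := x.2
    simp only [Cminus, Set.mem_setOf_eq] at hx2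
    simp only [Set.mem_setOf_eq] at hx
    simp only [Set.mem_preimage, Set.mem_prod, Set.mem_Iic]
    omega
  -- every singleton is open
  have key : ∀ p : Cminus, IsOpen ({p} : Set Cminus) := by
    rintro ⟨⟨i, j⟩, hij⟩
    have hij' : j ≤ i := hij
    -- the open set where we look for an isolated point
    have hUopen : IsOpen {x : Cminus | (x : ℕ × ℕ).2 ≤ j ∧ i + j < (x : ℕ × ℕ).1} := by
      have h1 := hopen2 j
      have h2 := ((hfin1 (i + j)).isClosed).isOpen_compl
      have : {x : Cminus | (x : ℕ × ℕ).2 ≤ j ∧ i + j < (x : ℕ × ℕ).1}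
          = {x : Cminus | (x : ℕ × ℕ).2 ≤ j} ∩ {x : Cminus | (x : ℕ × ℕ).1 ≤ i + j}ᶜ := by
        ext x
        simp only [Set.mem_setOf_eq, Set.mem_inter_iff, Set.mem_compl_iff, not_le]
      rw [this]
      exact h1.inter h2
    have hUne : ({x : Cminus | (x : ℕ × ℕ).2 ≤ j ∧ i + j < (x : ℕ × ℕ).1}).Nonempty := by
      refine ⟨⟨(i + j + 1, 0), by simp [Cminus]⟩, ?_⟩
      simp
    obtain ⟨x₀, hx₀U, hx₀iso⟩ := exists_isolated_aux hUopen hUne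
    obtain ⟨⟨A, B⟩, hAB⟩ := x₀
    have hAB' : B ≤ A := hAB
    simp only [Set.mem_setOf_eq] at hx₀U
    obtain ⟨hBj, hAN⟩ := hx₀U
    -- the translating element
    have hs : ((A - i + j, B) : ℕ × ℕ) ∈ Cminus := by
      simp only [Cminus, Set.mem_setOf_eq]
      omega
    set s : Cminus := ⟨(A - i + j, B), hs⟩ with hsdef
    set R := fun x : Cminus =>
      (⟨bmul (x : ℕ × ℕ) (s : ℕ × ℕ), Cminus.mul_mem x.2 s.2⟩ : Cminus) with hRdef
    have hPopen : IsOpen (R ⁻¹' {⟨(A, B), hAB⟩}) := hx₀iso.preimage (hright s)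
    have hPfin : (R ⁻¹' {⟨(A, B), hAB⟩}).Finite := hfin s ⟨(A, B), hAB⟩
    have hpP : (⟨(i, j), hij⟩ : Cminus) ∈ R ⁻¹' {⟨(A, B), hAB⟩} := by
      simp only [Set.mem_preimage, Set.mem_singleton_iff, hRdef, Subtype.ext_iff, bmul,
        Prod.ext_iff]
      constructor
      · simp [hsdef]
        omega
      · simp [hsdef]
    have hsing : ({(⟨(i, j), hij⟩ : Cminus)} : Set Cminus)
        = (R ⁻¹' {⟨(A, B), hAB⟩}) ∩ ((R ⁻¹' {⟨(A, B), hAB⟩}) \ {⟨(i, j), hij⟩})ᶜ := by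
      ext x
      simp only [Set.mem_singleton_iff, Set.mem_inter_iff, Set.mem_compl_iff, Set.mem_diff,
        not_and, not_not]
      constructor
      · rintro rfl
        exact ⟨hpP, fun _ => rfl⟩
      · rintro ⟨hxP, hx⟩
        exact hx hxP
    rw [hsing]
    exact hPopen.inter ((hPfin.subset Set.diff_subset).isClosed).isOpen_compl
  exact eq_bot_of_singletons_open key
end

section
/- Every Hausdorff right-continuous topology on the semigroup C₊(a,b) (i.e., every Hausdorff topology on C₊(a,b) making all left translations x ↦ s·x continuous) for which C₊(a,b) is locally compact is the discrete topology. -/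
/-- Fibers of left translation by `(0,j)` over points of the zeroth column are finite. -/
lemma fiber_finite (j c : ℕ) :
    {y : Cplus | bmul (0, j) (y : ℕ × ℕ) = (0, c)}.Finite := by
  have hsub : {y : Cplus | bmul (0, j) (y : ℕ × ℕ) = (0, c)} ⊆
      Subtype.val ⁻¹' (Set.Iic j ×ˢ Set.Iic c) := by
    rintro ⟨⟨m, n⟩, hmn⟩ hy
    simp only [Set.mem_setOf_eq, bmul, Prod.mk.injEq] at hy
    simp only [Set.mem_preimage, Set.mem_prod, Set.mem_Iic]
    omega
  exact (((Set.finite_Iic j).prod (Set.finite_Iic c)).preimage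
    Subtype.val_injective.injOn).subset hsub

/-- Preimage version of `fiber_finite`. -/
lemma fiber_finite' {j : ℕ} (hs : ((0, j) : ℕ × ℕ) ∈ Cplus) (w : Cplus) (c : ℕ)
    (hw : (w : ℕ × ℕ) = (0, c)) :
    ((fun x : Cplus =>
      (⟨bmul (0, j) (x : ℕ × ℕ), Cplus.mul_mem hs x.property⟩ : Cplus)) ⁻¹' {w}).Finite := by
  apply (fiber_finite j c).subset
  intro y hy
  simp only [Set.mem_preimage, Set.mem_singleton_iff, Subtype.ext_iff] at hy
  simp only [Set.mem_setOf_eq]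
  exact hy.trans hw

/-- A continuous map with finite fiber over `f x` sends non-isolated points to
non-isolated points (in a T1 space). -/
lemma not_isolated_map {X : Type*} [TopologicalSpace X] [T1Space X]
    {f : X → X} (hf : Continuous f) {x : X} (hx : ¬ IsOpen ({x} : Set X))
    (hfin : (f ⁻¹' {f x}).Finite) : ¬ IsOpen ({f x} : Set X) := by
  intro h
  apply hx
  have hW : IsOpen (f ⁻¹' {f x}) := h.preimage hf
  have h2 : IsClosed ((f ⁻¹' {f x}) \ {x}) := (hfin.subset Set.diff_subset).isClosed
  have hxe : ({x} : Set X) = (f ⁻¹' {f x}) ∩ ((f ⁻¹' {f x}) \ {x})ᶜ := by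
    ext q
    simp only [Set.mem_singleton_iff, Set.mem_inter_iff, Set.mem_preimage,
      Set.mem_compl_iff, Set.mem_diff, not_and, not_not]
    constructor
    · rintro rfl; exact ⟨rfl, fun _ => rfl⟩
    · rintro ⟨hq, hq2⟩; exact hq2 hq
  rw [hxe]
  exact hW.inter h2.isOpen_compl

/-- Every Hausdorff right-continuous topology on `C₊(a,b)` (all left translations
continuous) which is locally compact (every point has an open neighbourhood with compact
closure) is discrete. -/
theorem Cplus_discrete_of_rightContinuous_of_locallyCompact
    (t : TopologicalSpace Cplus)
    (ht2 : @T2Space Cplus t)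
    (hLC : ∀ x : Cplus, ∃ U : Set Cplus,
      @IsOpen Cplus t U ∧ x ∈ U ∧ @IsCompact Cplus t (@closure Cplus t U))
    (hleft : ∀ s : Cplus, @Continuous Cplus Cplus t t
      (fun x => ⟨bmul (s : ℕ × ℕ) (x : ℕ × ℕ), Cplus.mul_mem s.2 x.2⟩)) :
    t = ⊥ := by
  letI := t
  haveI := ht2
  apply eq_bot_of_singletons_open
  by_contra hcon
  push_neg at hcon
  obtain ⟨x₀, hx₀⟩ := hcon
  obtain ⟨⟨a, b⟩, hab⟩ := x₀
  -- the point (0,b) of the zeroth column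
  set zb : Cplus := ⟨(0, b), Nat.zero_le b⟩ with hzb
  -- step 1 : (0, b) is not isolated
  have h1 : ¬ IsOpen ({zb} : Set Cplus) := by
    have hs : ((0, a) : ℕ × ℕ) ∈ Cplus := Nat.zero_le a
    have hval : bmul (0, a) ((a, b) : ℕ × ℕ) = ((0, b) : ℕ × ℕ) := by
      simp only [bmul, Prod.mk.injEq]; omega
    have key := not_isolated_map (hleft ⟨(0, a), hs⟩) hx₀
      (fiber_finite' hs _ b hval)
    have heq : (⟨bmul ((0, a) : ℕ × ℕ) ((⟨(a, b), hab⟩ : Cplus) : ℕ × ℕ),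
        Cplus.mul_mem hs hab⟩ : Cplus) = zb := Subtype.ext hval
    rwa [heq] at key
  -- step 2 : every point (0, n) with b ≤ n is not isolated
  have hno : ∀ y : Cplus, (y : ℕ × ℕ).1 = 0 → b ≤ (y : ℕ × ℕ).2 →
      ¬ IsOpen ({y} : Set Cplus) := by
    rintro ⟨⟨y1, y2⟩, hy⟩ h0 hb2
    simp only at h0 hb2
    have hs : ((0, y2 - b) : ℕ × ℕ) ∈ Cplus := Nat.zero_le _
    have hval : bmul (0, y2 - b) ((zb : Cplus) : ℕ × ℕ) = ((y1, y2) : ℕ × ℕ) := by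
      simp only [hzb, bmul, Prod.mk.injEq]; omega
    have key := not_isolated_map (hleft ⟨(0, y2 - b), hs⟩) h1
      (fiber_finite' hs _ y2 (by show bmul ((0, y2 - b) : ℕ × ℕ) ((zb : ℕ × ℕ)) = _; rw [hval, h0]))
    have heq : (⟨bmul ((0, y2 - b) : ℕ × ℕ) ((zb : Cplus) : ℕ × ℕ),
        Cplus.mul_mem hs zb.property⟩ : Cplus) = ⟨(y1, y2), hy⟩ := Subtype.ext hval
    rwa [heq] at key
  -- the zeroth column is open
  have hcol : IsOpen {x : Cplus | (x : ℕ × ℕ).1 = 0} := by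
    have hs : ((1, 1) : ℕ × ℕ) ∈ Cplus := le_refl 1
    have hclosed : IsClosed {x : Cplus |
        (⟨bmul ((1, 1) : ℕ × ℕ) (x : ℕ × ℕ), Cplus.mul_mem hs x.property⟩ : Cplus) = x} :=
      isClosed_eq (hleft ⟨(1, 1), hs⟩) continuous_id
    have hset : {x : Cplus | (x : ℕ × ℕ).1 = 0} = {x : Cplus |
        (⟨bmul ((1, 1) : ℕ × ℕ) (x : ℕ × ℕ), Cplus.mul_mem hs x.property⟩ : Cplus) = x}ᶜ := by
      ext ⟨⟨m, n⟩, hmn⟩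
      simp only [Set.mem_setOf_eq, Set.mem_compl_iff, Subtype.ext_iff, bmul,
        Prod.mk.injEq]
      omega
    rw [hset]
    exact hclosed.isOpen_compl
  -- points with small second coordinate form a finite (hence closed) set
  have hfin2 : {x : Cplus | (x : ℕ × ℕ).2 < b}.Finite := by
    have hsub : {x : Cplus | (x : ℕ × ℕ).2 < b} ⊆
        Subtype.val ⁻¹' (Set.Iic b ×ˢ Set.Iic b) := by
      rintro ⟨⟨m, n⟩, hmn⟩ hx
      simp only [Set.mem_setOf_eq] at hx
      have hmn' : m ≤ n := hmn
      simp only [Set.mem_preimage, Set.mem_prod, Set.mem_Iic]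
      omega
    exact (((Set.finite_Iic b).prod (Set.finite_Iic b)).preimage
      Subtype.val_injective.injOn).subset hsub
  have htail : IsOpen {x : Cplus | b ≤ (x : ℕ × ℕ).2} := by
    have hceq : {x : Cplus | b ≤ (x : ℕ × ℕ).2} = {x : Cplus | (x : ℕ × ℕ).2 < b}ᶜ := by
      ext x; simp [not_lt]
    rw [hceq]
    exact hfin2.isClosed.isOpen_compl
  -- local compactness at zb
  obtain ⟨U, hU, hzU, hK⟩ := hLC zb
  set U' : Set Cplus :=
    U ∩ ({x : Cplus | (x : ℕ × ℕ).1 = 0} ∩ {x : Cplus | b ≤ (x : ℕ × ℕ).2}) with hU'def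
  have hU'open : IsOpen U' := hU.inter (hcol.inter htail)
  have hzU' : zb ∈ U' := ⟨hzU, rfl, le_refl b⟩
  have hKU' : IsCompact (closure U') :=
    hK.of_isClosed_subset isClosed_closure (closure_mono Set.inter_subset_left)
  -- Baire category on the compact Hausdorff space closure U'
  haveI : CompactSpace (closure U') := isCompact_iff_compactSpace.mp hKU'
  haveI : Nonempty (closure U') := ⟨⟨zb, subset_closure hzU'⟩⟩
  obtain ⟨p, hp⟩ := nonempty_interior_of_iUnion_of_closed
    (f := fun p : closure U' => ({p} : Set (closure U')))
    (fun _ => isClosed_singleton) (Set.iUnion_of_singleton _)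
  obtain ⟨q, hq⟩ := hp
  have hqp : q = p := Set.mem_singleton_iff.mp (interior_subset hq)
  rw [← hqp] at hq
  have hopenK : IsOpen ({q} : Set (closure U')) := by
    have hint : interior ({q} : Set (closure U')) = {q} :=
      le_antisymm interior_subset (Set.singleton_subset_iff.mpr hq)
    rw [← hint]
    exact isOpen_interior
  rw [isOpen_induced_iff] at hopenK
  obtain ⟨V, hV, hVeq⟩ := hopenK
  have hqV : (q : Cplus) ∈ V := by
    have hmem : q ∈ Subtype.val ⁻¹' V := by rw [hVeq]; rfl
    exact hmem
  -- the point q.val lies in U'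
  have hqU' : (q : Cplus) ∈ U' := by
    obtain ⟨r, hrV, hrU'⟩ := mem_closure_iff.mp q.2 V hV hqV
    have hmem : (⟨r, subset_closure hrU'⟩ : closure U') ∈ Subtype.val ⁻¹' V := hrV
    rw [hVeq] at hmem
    have hr : r = (q : Cplus) := congrArg Subtype.val hmem
    rwa [hr] at hrU'
  -- hence {q.val} = V ∩ U' is open in Cplus
  have hsing : ({(q : Cplus)} : Set Cplus) = V ∩ U' := by
    apply Set.eq_of_subset_of_subset
    · rintro x rfl; exact ⟨hqV, hqU'⟩
    · rintro x ⟨hxV, hxU'⟩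
      have hmem : (⟨x, subset_closure hxU'⟩ : closure U') ∈ Subtype.val ⁻¹' V := hxV
      rw [hVeq] at hmem
      exact congrArg Subtype.val hmem
  have hopen : IsOpen ({(q : Cplus)} : Set Cplus) := by
    rw [hsing]; exact hV.inter hU'open
  exact hno (q : Cplus) hqU'.2.1 hqU'.2.2 hopen
end

section
/- Every Hausdorff left-continuous topology on the semigroup C₋(a,b) (i.e., every Hausdorff topology on C₋(a,b) making all right translations x ↦ x·s continuous) for which C₋(a,b) is locally compact is the discrete topology. -/
/-- Right translation `x ↦ x · s` on `C₋(a,b)`. -/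
def Rt (s x : Cminus) : Cminus := ⟨bmul (x : ℕ × ℕ) (s : ℕ × ℕ), Cminus.mul_mem x.2 s.2⟩

lemma Cminus_mem_iff (p : ℕ × ℕ) : p ∈ Cminus ↔ p.2 ≤ p.1 := Iff.rfl

lemma Rt_mk_val_1 (m l : ℕ) (h : (m, l) ∈ Cminus) (x : Cminus) :
    (Rt ⟨(m, l), h⟩ x).val.1 = x.val.1 + m - min x.val.2 m := rfl

lemma Rt_mk_val_2 (m l : ℕ) (h : (m, l) ∈ Cminus) (x : Cminus) :
    (Rt ⟨(m, l), h⟩ x).val.2 = l + x.val.2 - min x.val.2 m := rfl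

lemma Cminus_mem_le (x : Cminus) : x.val.2 ≤ x.val.1 := x.2

/-- The upper cone over a point `a` of `C₋(a,b)`. -/
def cone (a : Cminus) : Set Cminus :=
  {x : Cminus | a.val.2 ≤ x.val.2 ∧ a.val.1 + x.val.2 ≤ x.val.1 + a.val.2}

lemma mem_cone {a x : Cminus} :
    x ∈ cone a ↔ a.val.2 ≤ x.val.2 ∧ a.val.1 + x.val.2 ≤ x.val.1 + a.val.2 := Iff.rfl

/-- Every Hausdorff left-continuous topology on `C₋(a,b)` (all right translations
continuous) which is locally compact (every point has an open neighbourhood with compact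
closure) is discrete. -/
theorem Cminus_discrete_of_leftContinuous_of_locallyCompact
    (t : TopologicalSpace Cminus)
    (ht2 : @T2Space Cminus t)
    (hLC : ∀ x : Cminus, ∃ U : Set Cminus,
      @IsOpen Cminus t U ∧ x ∈ U ∧ @IsCompact Cminus t (@closure Cminus t U))
    (hright : ∀ s : Cminus, @Continuous Cminus Cminus t t
      (fun x => ⟨bmul (x : ℕ × ℕ) (s : ℕ × ℕ), Cminus.mul_mem x.2 s.2⟩)) :
    t = ⊥ := by
  classical
  letI := t
  haveI := ht2
  have hRcont : ∀ s : Cminus, Continuous (Rt s) := hright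
  -- upper sets are closed
  have hTcl : ∀ n : ℕ, IsClosed {x : Cminus | n ≤ x.val.2} := by
    intro n
    have hfix : {x : Cminus | n ≤ x.val.2}
        = {x : Cminus | Rt ⟨(n, n), (Cminus_mem_iff _).2 le_rfl⟩ x = x} := by
      ext x
      have hx := Cminus_mem_le x
      simp only [Set.mem_setOf_eq, Subtype.ext_iff, Prod.ext_iff, Rt_mk_val_1, Rt_mk_val_2]
      omega
    rw [hfix]
    exact isClosed_eq (hRcont _) continuous_id
  -- slabs are open
  have hSlab : ∀ n : ℕ, IsOpen {x : Cminus | x.val.2 ≤ n} := by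
    intro n
    have h : {x : Cminus | x.val.2 ≤ n} = {x : Cminus | n + 1 ≤ x.val.2}ᶜ := by
      ext x
      simp only [Set.mem_setOf_eq, Set.mem_compl_iff, not_le]
      omega
    rw [h]
    exact (hTcl (n + 1)).isOpen_compl
  -- finite boxes
  have hFin : ∀ A B : ℕ, ({x : Cminus | x.val.1 ≤ A ∧ x.val.2 ≤ B}).Finite := by
    intro A B
    have h : {x : Cminus | x.val.1 ≤ A ∧ x.val.2 ≤ B}
        = Subtype.val ⁻¹' ((Set.Iic A) ×ˢ (Set.Iic B)) := by
      ext x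
      simp [Set.mem_prod, Prod.le_def]
    rw [h]
    exact Set.Finite.preimage Subtype.val_injective.injOn
      ((Set.finite_Iic A).prod (Set.finite_Iic B))
  apply eq_bot_of_singletons_open
  intro a
  by_contra hna
  have har : a.val.2 ≤ a.val.1 := a.2
  -- a is in the closure of the complement of {a}
  have hacl : a ∈ closure ({a}ᶜ : Set Cminus) := by
    by_contra h
    apply hna
    rw [← isClosed_compl_iff]
    apply isClosed_of_closure_subset
    intro x hx
    rcases eq_or_ne x a with rfl | hxa
    · exact absurd hx h
    · simpa using hxa
  -- Step 1: a is an accumulation point of its own row, with unbounded first coordinate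
  have PA : ∀ M : ℕ, a ∈ closure
      ({x : Cminus | x.val.2 = a.val.2 ∧ M ≤ x.val.1} \ {a}) := by
    intro M
    rw [mem_closure_iff]
    intro V hV haV
    set F : Set Cminus := {x : Cminus | x.val.2 ≤ a.val.2 ∧
        (x.val.1 + a.val.2 - x.val.2 < M ∨ x.val.1 + a.val.2 - x.val.2 = a.val.1)
        ∧ x ≠ a} with hF
    have hFfin : F.Finite := by
      apply (hFin (M + a.val.1) a.val.2).subset
      intro x hx
      rw [hF, Set.mem_setOf_eq] at hx
      obtain ⟨h1, h2, _⟩ := hx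
      exact ⟨by omega, h1⟩
    have hFcl : IsClosed F := hFfin.isClosed
    have hra : ((a.val.2, a.val.2) : ℕ × ℕ) ∈ Cminus := (Cminus_mem_iff _).2 le_rfl
    have hRa : Rt ⟨(a.val.2, a.val.2), hra⟩ a = a := by
      rw [Subtype.ext_iff, Prod.ext_iff, Rt_mk_val_1, Rt_mk_val_2]
      omega
    set V' : Set Cminus := V ∩ (Rt ⟨(a.val.2, a.val.2), hra⟩) ⁻¹' V
        ∩ {x : Cminus | x.val.2 ≤ a.val.2} ∩ Fᶜ with hV'
    have hV'o : IsOpen V' :=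
      (((hV.inter ((hRcont _).isOpen_preimage V hV)).inter (hSlab a.val.2)).inter
        hFcl.isOpen_compl)
    have haV' : a ∈ V' := by
      rw [hV']
      refine ⟨⟨⟨haV, ?_⟩, show a.val.2 ≤ a.val.2 from le_rfl⟩, ?_⟩
      · rw [Set.mem_preimage, hRa]; exact haV
      · intro hFa
        rw [hF, Set.mem_setOf_eq] at hFa
        exact hFa.2.2 rfl
    obtain ⟨x, hx⟩ := mem_closure_iff.1 hacl V' hV'o haV'
    have hxV' := hx.1
    have hxa : x ≠ a := hx.2
    obtain ⟨⟨⟨hxV, hxRV⟩, hxr⟩, hxF⟩ := hxV'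
    have hxr' : x.val.2 ≤ a.val.2 := hxr
    have hxle := Cminus_mem_le x
    have hnotF : ¬(x.val.2 ≤ a.val.2 ∧
        (x.val.1 + a.val.2 - x.val.2 < M ∨ x.val.1 + a.val.2 - x.val.2 = a.val.1)
        ∧ x ≠ a) := by
      intro hmem
      exact hxF (by rw [hF, Set.mem_setOf_eq]; exact hmem)
    have hbig : M ≤ x.val.1 + a.val.2 - x.val.2
        ∧ x.val.1 + a.val.2 - x.val.2 ≠ a.val.1 := by
      rcases lt_or_ge (x.val.1 + a.val.2 - x.val.2) M with h | h
      · exact absurd ⟨hxr', Or.inl h, hxa⟩ hnotF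
      · exact ⟨h, fun he => hnotF ⟨hxr', Or.inr he, hxa⟩⟩
    refine ⟨Rt ⟨(a.val.2, a.val.2), hra⟩ x, hxRV, ⟨?_, ?_⟩, ?_⟩
    · rw [Set.mem_setOf_eq] at *
      rw [Rt_mk_val_2]
      omega
    · rw [Rt_mk_val_1]
      omega
    · intro he
      rw [Set.mem_singleton_iff] at he
      apply hbig.2
      have h1 : (Rt ⟨(a.val.2, a.val.2), hra⟩ x).val.1 = a.val.1 := by rw [he]
      rw [Rt_mk_val_1] at h1
      omega
  -- Step 2: the property propagates to the whole upper cone over a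
  have PC : ∀ w : Cminus, a.val.2 ≤ w.val.2 → a.val.1 + w.val.2 ≤ w.val.1 + a.val.2 →
      ∀ M : ℕ, w ∈ closure ({x : Cminus | x.val.2 = w.val.2 ∧ M ≤ x.val.1} \ {w}) := by
    intro w hw1 hw2 M
    have hwle := Cminus_mem_le w
    have hs : ((w.val.1 + a.val.2 - a.val.1, w.val.2) : ℕ × ℕ) ∈ Cminus := by
      rw [Cminus_mem_iff]; omega
    have hRa : Rt ⟨(w.val.1 + a.val.2 - a.val.1, w.val.2), hs⟩ a = w := by
      rw [Subtype.ext_iff, Prod.ext_iff, Rt_mk_val_1, Rt_mk_val_2]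
      constructor <;> omega
    have hmaps : Set.MapsTo (Rt ⟨(w.val.1 + a.val.2 - a.val.1, w.val.2), hs⟩)
        ({x : Cminus | x.val.2 = a.val.2 ∧ M ≤ x.val.1} \ {a})
        ({x : Cminus | x.val.2 = w.val.2 ∧ M ≤ x.val.1} \ {w}) := by
      rintro x ⟨⟨hxrow, hxM⟩, hxa⟩
      have hxle := Cminus_mem_le x
      have hxa1 : x.val.1 ≠ a.val.1 := by
        intro h
        apply hxa
        rw [Set.mem_singleton_iff, Subtype.ext_iff, Prod.ext_iff]
        exact ⟨h, hxrow⟩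
      refine ⟨⟨?_, ?_⟩, ?_⟩
      · rw [Rt_mk_val_2]
        omega
      · rw [Rt_mk_val_1]
        omega
      · intro he
        rw [Set.mem_singleton_iff] at he
        apply hxa1
        have h1 : (Rt ⟨(w.val.1 + a.val.2 - a.val.1, w.val.2), hs⟩ x).val.1 = w.val.1 := by
          rw [he]
        rw [Rt_mk_val_1] at h1
        omega
    have hmc := map_mem_closure (hRcont _) (PA M) hmaps
    rwa [hRa] at hmc
  -- Baire machinery
  haveI : WeaklyLocallyCompactSpace Cminus := ⟨fun x => by
    obtain ⟨U, hUo, hxU, hUc⟩ := hLC x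
    exact ⟨closure U, hUc, Filter.mem_of_superset (hUo.mem_nhds hxU) subset_closure⟩⟩
  haveI : LocallyCompactSpace Cminus := WeaklyLocallyCompactSpace.locallyCompactSpace
  have haC : a ∈ cone a := mem_cone.2 ⟨le_rfl, le_rfl⟩
  have hYcl : IsClosed (closure (cone a)) := isClosed_closure
  haveI : LocallyCompactSpace (closure (cone a)) := hYcl.locallyCompactSpace
  haveI : Nonempty (closure (cone a)) := ⟨⟨a, subset_closure haC⟩⟩
  obtain ⟨y, hy⟩ := nonempty_interior_of_iUnion_of_closed
    (f := fun y : closure (cone a) => ({y} : Set (closure (cone a)))) (fun _ => isClosed_singleton)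
    (Set.iUnion_of_singleton _)
  have hyo : IsOpen ({y} : Set (closure (cone a))) := by
    have h1 : interior ({y} : Set (closure (cone a))) = {y} := by
      refine Set.Subset.antisymm interior_subset ?_
      obtain ⟨u, hu⟩ := hy
      have huy : u = y := Set.mem_singleton_iff.1 (interior_subset hu)
      intro z hz
      rw [Set.mem_singleton_iff] at hz
      rw [hz]; exact huy ▸ hu
    rw [← h1]; exact isOpen_interior
  obtain ⟨V, hVo, hVeq⟩ := isOpen_induced_iff.1 hyo
  have hwV : (y : Cminus) ∈ V := by
    have hmem : y ∈ Subtype.val ⁻¹' V := by rw [hVeq]; rfl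
    exact hmem
  have hwY : (y : Cminus) ∈ closure (cone a) := y.2
  by_cases hwC : (y : Cminus) ∈ cone a
  · rw [mem_cone] at hwC
    have hP := PC (y : Cminus) hwC.1 hwC.2 (a.val.1 + (y : Cminus).val.2)
    obtain ⟨x, hxV, hxS⟩ := mem_closure_iff.1 hP V hVo hwV
    obtain ⟨⟨hxrow, hxM⟩, hxw⟩ := hxS
    have hxC : x ∈ cone a := by
      rw [mem_cone]
      constructor <;> omega
    have hmem : (⟨x, subset_closure hxC⟩ : closure (cone a)) ∈ Subtype.val ⁻¹' V := hxV
    rw [hVeq, Set.mem_singleton_iff] at hmem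
    exact hxw (by rw [Set.mem_singleton_iff]; exact congrArg Subtype.val hmem)
  · obtain ⟨x, hxV, hxC⟩ := mem_closure_iff.1 hwY V hVo hwV
    have hmem : (⟨x, subset_closure hxC⟩ : closure (cone a)) ∈ Subtype.val ⁻¹' V := hxV
    rw [hVeq, Set.mem_singleton_iff] at hmem
    have hxy : x = (y : Cminus) := congrArg Subtype.val hmem
    exact hwC (hxy ▸ hxC)
end

section
/- Every Hausdorff right-continuous topology on the bicyclic monoid C(a,b) (i.e., every Hausdorff topology on ℕ × ℕ making all left translations x ↦ s·x of the bicyclic multiplication continuous) for which the space is Baire is the discrete topology. -/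
/-- Every Hausdorff right-continuous topology on the bicyclic monoid (all left
translations continuous) which is a Baire space is discrete. -/
theorem bicyclic_discrete_of_rightContinuous_of_baire
    (t : TopologicalSpace (ℕ × ℕ))
    (ht2 : @T2Space (ℕ × ℕ) t)
    (hBaire : @BaireSpace (ℕ × ℕ) t)
    (hleft : ∀ s : ℕ × ℕ, @Continuous (ℕ × ℕ) (ℕ × ℕ) t t (fun x => bmul s x)) :
    t = ⊥ := by
  letI := t
  haveI := ht2
  haveI := hBaire
  -- each point of a finite open set is isolated
  have hfin : ∀ (S : Set (ℕ × ℕ)), IsOpen S → S.Finite → ∀ x ∈ S,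
      IsOpen ({x} : Set (ℕ × ℕ)) := by
    intro S hS hSfin x hx
    have hxeq : ({x} : Set (ℕ × ℕ)) = S ∩ (S \ {x})ᶜ := by
      ext z
      simp only [Set.mem_singleton_iff, Set.mem_inter_iff, Set.mem_compl_iff, Set.mem_diff,
        not_and, not_not]
      constructor
      · rintro rfl; exact ⟨hx, fun _ => rfl⟩
      · rintro ⟨hzS, h2⟩; exact h2 hzS
    rw [hxeq]
    exact hS.inter ((hSfin.subset Set.diff_subset).isClosed).isOpen_compl
  -- every nonempty open set contains an isolated point (by Baire)
  have hB : ∀ (U : Set (ℕ × ℕ)), IsOpen U → U.Nonempty →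
      ∃ x ∈ U, IsOpen ({x} : Set (ℕ × ℕ)) := by
    intro U hU hne
    by_contra h
    push_neg at h
    have hd : Dense (⋂ z : U, ({(z : ℕ × ℕ)}ᶜ : Set (ℕ × ℕ))) := by
      apply dense_iInter_of_isOpen
      · intro z; exact isOpen_compl_singleton
      · intro z
        rw [dense_compl_singleton_iff_not_open]
        exact h z z.2
    have hsub : (⋂ z : U, ({(z : ℕ × ℕ)}ᶜ : Set (ℕ × ℕ))) ⊆ Uᶜ := by
      intro x hx hxU
      exact (Set.mem_iInter.mp hx ⟨x, hxU⟩) rfl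
    obtain ⟨y, hyU, hyI⟩ := hd.inter_open_nonempty U hU hne
    exact hsub hyI hyU
  -- preimages of isolated points under left translations are open
  have fiber : ∀ (s w : ℕ × ℕ), IsOpen ({w} : Set (ℕ × ℕ)) →
      IsOpen ((fun z => bmul s z) ⁻¹' {w}) :=
    fun s w hw => (hleft s).isOpen_preimage _ hw
  -- from an isolated point (k, l) we get that (0, l) is isolated
  have hA1 : ∀ k l, IsOpen ({(k, l)} : Set (ℕ × ℕ)) → IsOpen ({(0, l)} : Set (ℕ × ℕ)) := by
    intro k l h
    have hpre := fiber (k, 0) (k, l) h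
    have heq : (fun z => bmul (k, 0) z) ⁻¹' {(k, l)} = {((0 : ℕ), l)} := by
      ext z
      simp only [Set.mem_preimage, Set.mem_singleton_iff, bmul, Prod.mk.injEq, Prod.ext_iff]
      omega
    rwa [heq] at hpre
  -- from an isolated point (0, l) with n ≤ l we get that (m, n) is isolated
  have hA2 : ∀ l m n, n ≤ l → IsOpen ({(0, l)} : Set (ℕ × ℕ)) →
      IsOpen ({(m, n)} : Set (ℕ × ℕ)) := by
    intro l m n hnl h
    set b := m + (l - n) with hb
    have hpre := fiber (0, b) (0, l) h
    have heq : (fun z => bmul (0, b) z) ⁻¹' {((0 : ℕ), l)} =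
        {z : ℕ × ℕ | z.1 ≤ b ∧ z.2 + b = l + z.1} := by
      ext z
      simp only [Set.mem_preimage, Set.mem_singleton_iff, bmul, Prod.mk.injEq, Prod.ext_iff,
        Set.mem_setOf_eq]
      omega
    rw [heq] at hpre
    have hfinS : ({z : ℕ × ℕ | z.1 ≤ b ∧ z.2 + b = l + z.1}).Finite := by
      apply Set.Finite.subset ((Set.finite_Iic b).prod (Set.finite_Iic l))
      intro z hz
      simp only [Set.mem_setOf_eq] at hz
      simp only [Set.mem_prod, Set.mem_Iic]
      omega
    exact hfin _ hpre hfinS (m, n) (by simp only [Set.mem_setOf_eq]; omega)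
  -- isolated points with arbitrarily large second coordinate exist
  have hC : ∀ n : ℕ, ∃ k l, n ≤ l ∧ IsOpen ({(k, l)} : Set (ℕ × ℕ)) := by
    intro n
    by_contra hcon
    push_neg at hcon
    set w : ℕ × ℕ := (0, n) with hw
    have hw_ne : ¬ IsOpen ({w} : Set (ℕ × ℕ)) := fun h => absurd (hcon 0 n le_rfl) (by simpa [hw] using h)
    have hne : bmul (1, 1) w ≠ w := by
      simp [bmul, hw, Prod.ext_iff]
    obtain ⟨V, U, hV, hU, hmemV, hmemU, hUV⟩ := t2_separation hne
    set W : Set (ℕ × ℕ) := U ∩ (fun z => bmul (1, 1) z) ⁻¹' V with hWdef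
    have hWopen : IsOpen W := hU.inter ((hleft (1, 1)).isOpen_preimage _ hV)
    have hwW : w ∈ W := ⟨hmemU, by simpa [Set.mem_preimage] using hmemV⟩
    -- the finite "column" set
    set F : Set (ℕ × ℕ) := Set.Iic 0 ×ˢ Set.Iic n with hF
    have hFfin : F.Finite := (Set.finite_Iic (0 : ℕ)).prod (Set.finite_Iic n)
    have hWF_open : IsOpen (W \ F) := by
      rw [Set.diff_eq]
      exact hWopen.inter hFfin.isClosed.isOpen_compl
    have hWF_ne : (W \ F).Nonempty := by
      rcases Set.eq_empty_or_nonempty (W \ F) with hemp | hne'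
      · exfalso
        have hWsub : W ⊆ F := by
          intro z hz
          by_contra hzF
          exact Set.eq_empty_iff_forall_notMem.mp hemp z ⟨hz, hzF⟩
        have : IsOpen ({w} : Set (ℕ × ℕ)) :=
          hfin W hWopen (hFfin.subset hWsub) w hwW
        exact hw_ne this
      · exact hne'
    obtain ⟨z, hzWF, hziso⟩ := hB (W \ F) hWF_open hWF_ne
    obtain ⟨⟨hzU, hzV⟩, hzF⟩ := hzWF
    -- z is isolated, hence z.2 < n by hcon
    have hz2 : z.2 < n := by
      have := hcon z.1 z.2
      by_contra hle
      push_neg at hle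
      exact absurd (this hle) (by simpa using hziso)
    -- z not in F and z.2 ≤ n forces z.1 ≥ 1
    have hz1 : 1 ≤ z.1 := by
      by_contra h1
      push_neg at h1
      apply hzF
      simp only [hF, Set.mem_prod, Set.mem_Iic]
      omega
    -- translation by (1,1) fixes z
    have hfix : bmul (1, 1) z = z := by
      simp only [bmul, Prod.ext_iff]
      omega
    have hzV' : z ∈ V := by
      have : bmul (1, 1) z ∈ V := hzV
      rwa [hfix] at this
    exact Set.disjoint_iff.mp hUV ⟨hzV', hzU⟩
  -- conclude: every singleton is open
  apply eq_bot_of_singletons_open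
  intro x
  obtain ⟨m, n⟩ := x
  obtain ⟨k, l, hnl, hiso⟩ := hC n
  exact hA2 l m n hnl (hA1 k l hiso)
end

section
/- Every Hausdorff left-continuous topology on the bicyclic monoid C(a,b) (i.e., every Hausdorff topology on ℕ × ℕ making all right translations x ↦ x·s of the bicyclic multiplication continuous) for which the space is Baire is the discrete topology. -/
/-- Every Hausdorff left-continuous topology on the bicyclic monoid (all right
translations continuous) which is a Baire space is discrete. -/
theorem bicyclic_discrete_of_leftContinuous_of_baire
    (t : TopologicalSpace (ℕ × ℕ))
    (ht2 : @T2Space (ℕ × ℕ) t)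
    (hBaire : @BaireSpace (ℕ × ℕ) t)
    (hright : ∀ s : ℕ × ℕ, @Continuous (ℕ × ℕ) (ℕ × ℕ) t t (fun x => bmul x s)) :
    t = ⊥ := by
  classical
  letI := t
  haveI := ht2
  haveI := hBaire
  -- The set of isolated points
  set I : Set (ℕ × ℕ) := {p | IsOpen ({p} : Set (ℕ × ℕ))} with hI
  -- Step 1: I is dense
  have hdenseI : Dense I := by
    set ι := {p : ℕ × ℕ // ¬ IsOpen ({p} : Set (ℕ × ℕ))} with hι
    set g : ι → Set (ℕ × ℕ) := fun i => {i.1}ᶜ with hg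
    have hsub : (⋂ i, g i) ⊆ I := by
      intro x hx
      by_contra hxI
      exact Set.mem_iInter.1 hx ⟨x, hxI⟩ rfl
    refine Dense.mono hsub (dense_iInter_of_isOpen ?_ ?_)
    · intro i
      exact isOpen_compl_singleton
    · intro i
      rw [dense_iff_inter_open]
      intro U hU hUne
      by_contra hempty
      rw [Set.not_nonempty_iff_eq_empty] at hempty
      have hUsub : U ⊆ {i.1} := by
        intro x hxU
        by_contra hxp
        exact Set.eq_empty_iff_forall_notMem.1 hempty x ⟨hxU, hxp⟩
      have hUeq : U = {i.1} := by
        apply Set.Subset.antisymm hUsub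
        obtain ⟨y, hy⟩ := hUne
        have : y = i.1 := hUsub hy
        subst this
        exact Set.singleton_subset_iff.2 hy
      exact i.2 (hUeq ▸ hU)
  -- Step 3 (transfer): if (k,l) is isolated and m ≤ k, then (m,n) is isolated
  have transfer : ∀ k l m n : ℕ, m ≤ k → IsOpen ({(k, l)} : Set (ℕ × ℕ)) →
      IsOpen ({(m, n)} : Set (ℕ × ℕ)) := by
    intro k l m n hmk hkl
    set u := k - m + n with hu
    set F : Set (ℕ × ℕ) := (fun x => bmul x (u, l)) ⁻¹' {(k, l)} with hF
    have hFopen : IsOpen F := (hright (u, l)).isOpen_preimage _ hkl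
    have hmem : (m, n) ∈ F := by
      have hnu : n ≤ u := by omega
      simp only [hF, Set.mem_preimage, Set.mem_singleton_iff, bmul]
      have : min n u = n := min_eq_left hnu
      simp only [this, Prod.mk.injEq]
      omega
    have hFfin : F.Finite := by
      have hsub : F ⊆ Set.Iic k ×ˢ Set.Iic (l + u) := by
        rintro ⟨x, y⟩ hxy
        simp only [hF, Set.mem_preimage, Set.mem_singleton_iff, bmul, Prod.mk.injEq] at hxy
        obtain ⟨h1, h2⟩ := hxy
        simp only [Set.mem_prod, Set.mem_Iic]
        constructor
        · have : min y u ≤ u := min_le_right _ _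
          omega
        · have : min y u ≤ y := min_le_left _ _
          have : u ≤ u := le_refl u
          rcases le_or_gt y u with h | h
          · have : min y u = y := min_eq_left h
            omega
          · have : min y u = u := min_eq_right h.le
            omega
      exact Set.Finite.subset ((Set.finite_Iic k).prod (Set.finite_Iic (l + u))) hsub
    have hclosed : IsClosed (F \ {(m, n)}) :=
      Set.Finite.isClosed (hFfin.subset Set.diff_subset)
    have : IsOpen (F \ (F \ {(m, n)})) := hFopen.sdiff hclosed
    have heq : F \ (F \ {(m, n)}) = {(m, n)} := by
      ext x
      simp only [Set.mem_diff, Set.mem_singleton_iff]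
      constructor
      · rintro ⟨hxF, hx⟩
        by_contra hne
        exact hx ⟨hxF, hne⟩
      · rintro rfl
        exact ⟨hmem, fun h => h.2 rfl⟩
    rwa [heq] at this
  -- Step 2: for every a there is an isolated point with first coordinate ≥ a
  have step2 : ∀ a : ℕ, ∃ k l : ℕ, a ≤ k ∧ IsOpen ({(k, l)} : Set (ℕ × ℕ)) := by
    intro a
    by_contra hcon
    push_neg at hcon
    have hIsub : I ⊆ {p : ℕ × ℕ | p.1 < a} := by
      rintro ⟨k, l⟩ hkl
      simp only [Set.mem_setOf_eq]
      by_contra h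
      exact hcon k l (by omega) hkl
    set q : ℕ × ℕ := (a, 0) with hq
    -- the fixed-point set of right translation by (1,1)
    set f : ℕ × ℕ → ℕ × ℕ := fun x => bmul x (1, 1) with hf
    have hfcont : Continuous f := hright (1, 1)
    have hFixClosed : IsClosed {x : ℕ × ℕ | f x = x} := isClosed_eq hfcont continuous_id
    have hfix : ∀ x : ℕ × ℕ, 1 ≤ x.2 → f x = x := by
      rintro ⟨x, y⟩ hy
      simp only [hf, bmul]
      have : min y 1 = 1 := min_eq_right hy
      simp only [this, Prod.mk.injEq]
      omega
    -- q is in the closure of the fixed-point set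
    have hqcl : q ∈ closure {x : ℕ × ℕ | f x = x} := by
      rw [mem_closure_iff]
      intro U hU hqU
      -- the finite set of "bad" points
      set S : Set (ℕ × ℕ) := (Set.Iio a ×ˢ ({0} : Set ℕ)) ∪ {q} with hS
      have hSfin : S.Finite :=
        Set.Finite.union (((Set.finite_Iio a).prod (Set.finite_singleton 0)))
          (Set.finite_singleton q)
      have hSclosed : IsClosed S := hSfin.isClosed
      set V : Set (ℕ × ℕ) := U \ S with hV
      have hVopen : IsOpen V := hU.sdiff hSclosed
      -- V is nonempty: q is not isolated, so U \ (Iio a ×ˢ {0}) is not just {q}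
      have hVne : V.Nonempty := by
        set W : Set (ℕ × ℕ) := U \ (Set.Iio a ×ˢ ({0} : Set ℕ)) with hW
        have hWopen : IsOpen W :=
          hU.sdiff (((Set.finite_Iio a).prod (Set.finite_singleton 0)).isClosed)
        have hqW : q ∈ W := by
          refine ⟨hqU, ?_⟩
          simp [hq]
        have hqnotiso : ¬ IsOpen ({q} : Set (ℕ × ℕ)) := by
          intro h
          have := hIsub h
          simp [hq] at this
        have : ∃ r ∈ W, r ≠ q := by
          by_contra hall
          push_neg at hall
          have : W = {q} := by
            apply Set.Subset.antisymm
            · intro x hx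
              exact Set.mem_singleton_iff.2 (hall x hx)
            · exact Set.singleton_subset_iff.2 hqW
          exact hqnotiso (this ▸ hWopen)
        obtain ⟨r, hrW, hrq⟩ := this
        exact ⟨r, hrW.1, fun h => by
          rcases h with h | h
          · exact hrW.2 h
          · exact hrq h⟩
      -- density of I gives an isolated point in V, which has second coordinate ≥ 1
      obtain ⟨p, hpV, hpI⟩ := dense_iff_inter_open.1 hdenseI V hVopen hVne
      have hp1 : p.1 < a := hIsub hpI
      have hp2 : 1 ≤ p.2 := by
        by_contra h
        push_neg at h
        have hp20 : p.2 = 0 := by omega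
        exact hpV.2 (Or.inl (by
          simp only [Set.mem_prod, Set.mem_Iio, Set.mem_singleton_iff]
          exact ⟨hp1, hp20⟩))
      exact ⟨p, hpV.1, hfix p hp2⟩
    have : f q = q := by
      have h2 : q ∈ {x : ℕ × ℕ | f x = x} := by rwa [← hFixClosed.closure_eq]
      exact h2
    simp only [hf, hq, bmul] at this
    simp at this
  -- Step 4: every singleton is open
  have key : ∀ p : ℕ × ℕ, IsOpen ({p} : Set (ℕ × ℕ)) := by
    rintro ⟨m, n⟩
    obtain ⟨k, l, hmk, hkl⟩ := step2 m
    exact transfer k l m n hmk hkl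
  exact eq_bot_of_singletons_open key
end

section
/- Every Hausdorff topology on the bicyclic monoid C(a,b) that is locally compact and either right-continuous (all left translations x ↦ s·x continuous) or left-continuous (all right translations x ↦ x·s continuous) is the discrete topology. -/
theorem bicyclic_key (t : TopologicalSpace (ℕ × ℕ))
    (ht2 : @T2Space (ℕ × ℕ) t)
    (hLC : ∀ x : ℕ × ℕ, ∃ U : Set (ℕ × ℕ),
      @IsOpen (ℕ × ℕ) t U ∧ x ∈ U ∧ @IsCompact (ℕ × ℕ) t (@closure (ℕ × ℕ) t U))
    (hL : ∀ s : ℕ × ℕ, @Continuous (ℕ × ℕ) (ℕ × ℕ) t t (fun x => bmul s x)) :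
    t = ⊥ := by
  letI := t
  haveI : WeaklyLocallyCompactSpace (ℕ × ℕ) := ⟨fun x => by
    obtain ⟨U, hUo, hxU, hUc⟩ := hLC x
    exact ⟨closure U, hUc, Filter.mem_of_superset (hUo.mem_nhds hxU) subset_closure⟩⟩
  haveI : BaireSpace (ℕ × ℕ) := inferInstance
  -- density of isolated points
  have hdense : ∀ O : Set (ℕ × ℕ), IsOpen O → O.Nonempty → ∃ d ∈ O, IsOpen ({d} : Set (ℕ × ℕ)) := by
    intro O hO hne
    by_contra hno
    push_neg at hno
    have hd : Dense (⋂ d : O, ({(d : ℕ × ℕ)}ᶜ : Set (ℕ × ℕ))) :=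
      dense_iInter_of_isOpen (fun d => isClosed_singleton.isOpen_compl)
        (fun d => dense_compl_singleton_iff_not_open.2 (hno d d.2))
    have hiff : (⋂ d : O, ({(d : ℕ × ℕ)}ᶜ : Set (ℕ × ℕ))) = Oᶜ := by
      ext x
      simp only [Set.mem_iInter, Set.mem_compl_iff, Set.mem_singleton_iff]
      constructor
      · intro h hx; exact h ⟨x, hx⟩ rfl
      · rintro h ⟨d, hdO⟩ rfl; exact h hdO
    rw [hiff] at hd
    obtain ⟨x, hx1, hx2⟩ := hd.inter_open_nonempty O hO hne
    exact hx2 hx1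
  -- downward propagation of isolatedness
  have hA : ∀ k0 l0 u v : ℕ, IsOpen ({((k0, l0) : ℕ × ℕ)} : Set (ℕ × ℕ)) → v ≤ l0 →
      IsOpen ({((u, v) : ℕ × ℕ)} : Set (ℕ × ℕ)) := by
    intro k0 l0 u v hk hv
    have h1 : IsOpen ({((0, l0) : ℕ × ℕ)} : Set (ℕ × ℕ)) := by
      have h := hk.preimage (hL (k0, 0))
      have he : (fun x => bmul (k0, 0) x) ⁻¹' {((k0, l0) : ℕ × ℕ)} = {((0, l0) : ℕ × ℕ)} := by
        ext ⟨m, n⟩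
        simp only [Set.mem_preimage, Set.mem_singleton_iff, bmul, Prod.mk.injEq, Prod.ext_iff]
        omega
      rwa [he] at h
    set b := l0 + u - v with hb
    set T : Set (ℕ × ℕ) := (fun x => bmul (0, b) x) ⁻¹' {((0, l0) : ℕ × ℕ)} with hT
    have hTo : IsOpen T := h1.preimage (hL (0, b))
    have hmem : ∀ x : ℕ × ℕ, x ∈ T ↔ (x.1 - min b x.1 = 0 ∧ x.2 + b - min b x.1 = l0) := by
      intro ⟨m, n⟩
      simp only [hT, Set.mem_preimage, Set.mem_singleton_iff, bmul, Prod.mk.injEq, Prod.ext_iff]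
      omega
    have huvT : (u, v) ∈ T := by rw [hmem]; simp only; omega
    have hTfin : T.Finite := by
      apply Set.Finite.subset ((Set.finite_Iic b).prod (Set.finite_Iic l0))
      intro x hx
      rw [hmem] at hx
      exact ⟨by simp only [Set.mem_Iic]; omega, by simp only [Set.mem_Iic]; omega⟩
    have hsub : (T \ {((u, v) : ℕ × ℕ)}).Finite := hTfin.diff
    have : ({((u, v) : ℕ × ℕ)} : Set (ℕ × ℕ)) = T ∩ (T \ {((u, v) : ℕ × ℕ)})ᶜ := by
      ext x
      simp only [Set.mem_singleton_iff, Set.mem_inter_iff, Set.mem_compl_iff, Set.mem_diff,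
        not_and, not_not]
      constructor
      · rintro rfl; exact ⟨huvT, fun _ => rfl⟩
      · rintro ⟨hxT, h⟩; exact h hxT
    rw [this]
    exact hTo.inter hsub.isClosed.isOpen_compl
  -- main argument
  apply eq_bot_of_singletons_open
  by_contra hcon
  push_neg at hcon
  obtain ⟨z, hz⟩ := hcon
  have hbound : ∀ d : ℕ × ℕ, IsOpen ({d} : Set (ℕ × ℕ)) → d.2 < z.2 := by
    intro d hd
    by_contra hge
    push_neg at hge
    exact hz (by simpa using hA d.1 d.2 z.1 z.2 (by simpa using hd) hge)
  obtain ⟨U, hUo, hzU, hKc⟩ := hLC z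
  set S : Set (ℕ × ℕ) := {x | x ∈ U ∧ IsOpen ({x} : Set (ℕ × ℕ))} with hS
  have hSinf : S.Infinite := by
    by_contra hfin
    rw [Set.not_infinite] at hfin
    have hzS : z ∉ S := fun h => hz h.2
    have hop : IsOpen (U ∩ Sᶜ) := hUo.inter hfin.isClosed.isOpen_compl
    obtain ⟨d, hd, hdo⟩ := hdense _ hop ⟨z, hzU, hzS⟩
    exact hd.2 ⟨hd.1, hdo⟩
  -- pigeonhole: some row contains infinitely many isolated points of U
  obtain ⟨n', hBinf⟩ : ∃ n : ℕ, {x ∈ S | x.2 = n}.Infinite := by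
    by_contra h
    push_neg at h
    apply hSinf
    have hsub : S ⊆ ⋃ n ∈ Set.Iio z.2, {x ∈ S | x.2 = n} := by
      intro x hx
      exact Set.mem_biUnion (hbound x hx.2) ⟨hx, rfl⟩
    exact Set.Finite.subset (Set.Finite.biUnion (Set.finite_Iio _) (fun n _ => h n)) hsub
  set B : Set (ℕ × ℕ) := {x ∈ S | x.2 = n'} with hB
  have hBK : B ⊆ closure U := fun x hx => subset_closure hx.1.1
  -- a cluster point of B in the compact set closure U
  obtain ⟨w, -, hwcl⟩ : ∃ w ∈ closure U, ∀ V : Set (ℕ × ℕ), IsOpen V → w ∈ V →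
      (V ∩ B).Infinite := by
    by_contra h
    push_neg at h
    choose V hVo hVmem hVfin using h
    obtain ⟨F, hF⟩ := hKc.elim_finite_subcover (fun w : closure U => V w w.2)
      (fun w => hVo w w.2) (fun x hx => Set.mem_iUnion.2 ⟨⟨x, hx⟩, hVmem x hx⟩)
    apply hBinf
    apply Set.Finite.subset (Set.Finite.biUnion F.finite_toSet (fun w _ => hVfin w w.2))
    intro x hx
    obtain ⟨w, hwF, hxV⟩ := Set.mem_iUnion₂.1 (hF (hBK hx))
    exact Set.mem_biUnion hwF ⟨hxV, hx⟩
  -- the contradiction via the idempotent translation (j, j)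
  set j := w.1 + 1 with hj
  have hfw : bmul (j, j) w ≠ w := by
    simp only [bmul, Ne, Prod.ext_iff, not_and]
    intro h1
    omega
  obtain ⟨O1, O2, hO1, hO2, hwO1, hfwO2, hdisj⟩ := t2_separation (Ne.symm hfw)
  have hO3 : IsOpen (O1 ∩ (fun x => bmul (j, j) x) ⁻¹' O2) := hO1.inter (hO2.preimage (hL (j, j)))
  have hwO3 : w ∈ O1 ∩ (fun x => bmul (j, j) x) ⁻¹' O2 := ⟨hwO1, hfwO2⟩
  have hinf := hwcl _ hO3 hwO3
  have hfin' : ((O1 ∩ (fun x => bmul (j, j) x) ⁻¹' O2) ∩ B ∩ {x : ℕ × ℕ | x.1 < j}).Finite := by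
    apply Set.Finite.subset ((Set.finite_Iio j).prod (Set.finite_singleton n'))
    rintro ⟨m, n⟩ ⟨⟨-, hBx⟩, hlt⟩
    exact ⟨hlt, hBx.2⟩
  obtain ⟨x, hxmem, hxge⟩ : ∃ x ∈ (O1 ∩ (fun x => bmul (j, j) x) ⁻¹' O2) ∩ B, j ≤ x.1 := by
    obtain ⟨x, hx1, hx2⟩ := (hinf.diff hfin').nonempty
    refine ⟨x, hx1, ?_⟩
    by_contra hlt
    exact hx2 ⟨hx1, by simpa using hlt⟩
  have hfx : bmul (j, j) x = x := by
    simp only [bmul, Prod.ext_iff]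
    constructor <;> omega
  have hx2 : x ∈ O2 := by
    have := hxmem.1.2
    rwa [Set.mem_preimage, hfx] at this
  exact Set.disjoint_left.1 hdisj hxmem.1.1 hx2

/-- Every Hausdorff locally compact topology on the bicyclic monoid (every point has an
open neighbourhood with compact closure) which is right-continuous (all left translations
continuous) or left-continuous (all right translations continuous) is discrete. -/
theorem bicyclic_discrete_of_locallyCompact
    (t : TopologicalSpace (ℕ × ℕ))
    (ht2 : @T2Space (ℕ × ℕ) t)
    (hLC : ∀ x : ℕ × ℕ, ∃ U : Set (ℕ × ℕ),
      @IsOpen (ℕ × ℕ) t U ∧ x ∈ U ∧ @IsCompact (ℕ × ℕ) t (@closure (ℕ × ℕ) t U))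
    (hshift : (∀ s : ℕ × ℕ, @Continuous (ℕ × ℕ) (ℕ × ℕ) t t (fun x => bmul s x)) ∨
      (∀ s : ℕ × ℕ, @Continuous (ℕ × ℕ) (ℕ × ℕ) t t (fun x => bmul x s))) :
    t = ⊥ := by
  rcases hshift with hL | hR
  · exact bicyclic_key t ht2 hLC hL
  · set t' : TopologicalSpace (ℕ × ℕ) := t.induced Prod.swap with ht'def
    have hc1 : @Continuous _ _ t' t Prod.swap := continuous_induced_dom
    have hc2 : @Continuous _ _ t t' Prod.swap := by
      rw [@continuous_def _ _ t t']
      intro s hs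
      obtain ⟨V, hV, rfl⟩ := hs
      have : Prod.swap ⁻¹' (Prod.swap ⁻¹' V) = V := by
        ext y; simp
      rwa [this]
    have ht2' : @T2Space (ℕ × ℕ) t' := by
      refine @T2Space.mk _ t' ?_
      intro x y hxy
      have hxy' : Prod.swap x ≠ Prod.swap y := fun h => hxy (Prod.swap_injective h)
      obtain ⟨O1, O2, h1, h2, m1, m2, hd⟩ := @t2_separation _ t ht2 _ _ hxy'
      exact ⟨Prod.swap ⁻¹' O1, Prod.swap ⁻¹' O2,
        @IsOpen.preimage _ _ t' t _ hc1 _ h1, @IsOpen.preimage _ _ t' t _ hc1 _ h2,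
        m1, m2, Set.disjoint_left.2 fun a ha hb => Set.disjoint_left.1 hd ha hb⟩
    have hLC' : ∀ x : ℕ × ℕ, ∃ U : Set (ℕ × ℕ),
        @IsOpen (ℕ × ℕ) t' U ∧ x ∈ U ∧ @IsCompact (ℕ × ℕ) t' (@closure (ℕ × ℕ) t' U) := by
      intro x
      obtain ⟨U, hUo, hxU, hUc⟩ := hLC (Prod.swap x)
      refine ⟨Prod.swap ⁻¹' U, @IsOpen.preimage _ _ t' t _ hc1 U hUo, hxU, ?_⟩
      have hcl : @IsClosed _ t' (Prod.swap ⁻¹' (@closure _ t U)) :=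
        @IsClosed.preimage _ _ t' t _ hc1 _ (@isClosed_closure _ t U)
      have hsub : @closure _ t' (Prod.swap ⁻¹' U) ⊆ Prod.swap ⁻¹' (@closure _ t U) :=
        @closure_minimal _ t' _ _ (Set.preimage_mono (@subset_closure _ t _)) hcl
      have himg : Prod.swap ⁻¹' (@closure _ t U) = Prod.swap '' (@closure _ t U) := by
        ext y
        constructor
        · intro hy; exact ⟨Prod.swap y, hy, rfl⟩
        · rintro ⟨z, hz, rfl⟩; simpa using hz
      have hcomp : @IsCompact _ t' (Prod.swap ⁻¹' (@closure _ t U)) := by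
        rw [himg]
        exact @IsCompact.image _ _ t t' _ _ hUc hc2
      exact @IsCompact.of_isClosed_subset _ t' _ _ hcomp (@isClosed_closure _ t' _) hsub
    have hL' : ∀ s : ℕ × ℕ, @Continuous _ _ t' t' (fun x => bmul s x) := by
      intro s
      have heq : (fun x => bmul s x) =
          Prod.swap ∘ (fun y => bmul y (Prod.swap s)) ∘ Prod.swap := by
        funext x
        simp only [Function.comp, bmul, Prod.swap, Prod.ext_iff]
        constructor <;> omega
      rw [heq]
      exact @Continuous.comp _ _ _ t' t t' _ _ hc2 (@Continuous.comp _ _ _ t' t t _ _ (hR (Prod.swap s)) hc1)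
    have hbot : t' = ⊥ := bicyclic_key t' ht2' hLC' hL'
    apply eq_bot_of_singletons_open
    intro x
    have h1 : @IsOpen _ t' ({Prod.swap x} : Set (ℕ × ℕ)) := by
      rw [hbot]
      exact @isOpen_discrete _ ⊥ (discreteTopology_bot _) _
    have h2 := @IsOpen.preimage _ _ t t' Prod.swap hc2 _ h1
    have heq : Prod.swap ⁻¹' ({Prod.swap x} : Set (ℕ × ℕ)) = {x} := by
      ext y
      simp [Prod.ext_iff, eq_comm, and_comm]
    rwa [heq] at h2
end

section
/- Let p be a prime and m ≤ n natural numbers. The multiplication of the semigroup C₊^{[m,n]}(a,b) is jointly continuous with respect to the topology τ_p^{m,n}; that is, (C₊^{[m,n]}(a,b), τ_p^{m,n}) is a topological semigroup. -/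
/-- The subsemigroup `C₊^{[m,n]}(a,b) = {(i, i+j) : m ≤ i ≤ n, j ∈ ℕ}` of the bicyclic
monoid. -/
def Cmn (m n : ℕ) : Set (ℕ × ℕ) := {x | m ≤ x.1 ∧ x.1 ≤ n ∧ x.1 ≤ x.2}

lemma Cmn.mul_mem {m n : ℕ} {x y : ℕ × ℕ} (hx : x ∈ Cmn m n) (hy : y ∈ Cmn m n) :
    bmul x y ∈ Cmn m n := by
  simp only [Cmn, Set.mem_setOf_eq, bmul] at *
  omega

/-- The topology `τ_p^{m,n}` on `C₊^{[m,n]}(a,b)`, generated by the base consisting of the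
singletons `{(i, i+j)}` for `i + j ≤ n` together with the sets
`V_s(i, i+j) = {(i, i+j+t) : t ∈ p^s·ℕ}` for `i + j > n` and `s ≥ 1`. -/
def tauP (p m n : ℕ) : TopologicalSpace (Cmn m n) :=
  TopologicalSpace.generateFrom
    ({U | ∃ x : Cmn m n, (x : ℕ × ℕ).2 ≤ n ∧ U = {x}} ∪
     {U | ∃ x : Cmn m n, ∃ s : ℕ, 1 ≤ s ∧ n < (x : ℕ × ℕ).2 ∧
        U = {y : Cmn m n | ∃ t : ℕ,
          (y : ℕ × ℕ) = ((x : ℕ × ℕ).1, (x : ℕ × ℕ).2 + p ^ s * t)}})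

lemma singleton_isOpen {p m n : ℕ} (x : Cmn m n) (hx : (x : ℕ × ℕ).2 ≤ n) :
    (tauP p m n).IsOpen {x} :=
  TopologicalSpace.GenerateOpen.basic _ (Or.inl ⟨x, hx, rfl⟩)

lemma Vs_isOpen {p m n : ℕ} (x : Cmn m n) (s : ℕ) (hs : 1 ≤ s) (hx : n < (x : ℕ × ℕ).2) :
    (tauP p m n).IsOpen {y : Cmn m n | ∃ t : ℕ,
        (y : ℕ × ℕ) = ((x : ℕ × ℕ).1, (x : ℕ × ℕ).2 + p ^ s * t)} :=
  TopologicalSpace.GenerateOpen.basic _ (Or.inr ⟨x, s, hs, hx, rfl⟩)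

lemma mem_Vs_self {p m n : ℕ} (x : Cmn m n) (s : ℕ) :
    x ∈ {y : Cmn m n | ∃ t : ℕ,
        (y : ℕ × ℕ) = ((x : ℕ × ℕ).1, (x : ℕ × ℕ).2 + p ^ s * t)} :=
  ⟨0, by simp⟩

/-- For a prime `p` and `m ≤ n`, the multiplication of `C₊^{[m,n]}(a,b)` is jointly
continuous with respect to `τ_p^{m,n}`; i.e. `(C₊^{[m,n]}(a,b), τ_p^{m,n})` is a
topological semigroup. -/
theorem tauP_isTopologicalSemigroup (p m n : ℕ) (hp : p.Prime) (hmn : m ≤ n) :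
    @Continuous (Cmn m n × Cmn m n) (Cmn m n)
      (@instTopologicalSpaceProd _ _ (tauP p m n) (tauP p m n)) (tauP p m n)
      (fun z => ⟨bmul (z.1 : ℕ × ℕ) (z.2 : ℕ × ℕ), Cmn.mul_mem z.1.2 z.2.2⟩) := by
  letI T : TopologicalSpace (Cmn m n) := tauP p m n
  set f : Cmn m n × Cmn m n → Cmn m n :=
    fun z => ⟨bmul (z.1 : ℕ × ℕ) (z.2 : ℕ × ℕ), Cmn.mul_mem z.1.2 z.2.2⟩ with hf
  show @Continuous _ _ _ (tauP p m n) f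
  rw [show tauP p m n = TopologicalSpace.generateFrom _ from rfl,
    continuous_generateFrom_iff]
  rintro U (⟨w, hw, rfl⟩ | ⟨w, s, hs, hw, rfl⟩)
  · -- U = {w}, w isolated
    rw [isOpen_prod_iff]
    rintro x y hxy
    simp only [Set.mem_preimage, Set.mem_singleton_iff] at hxy
    have hxy' : bmul (x : ℕ × ℕ) (y : ℕ × ℕ) = (w : ℕ × ℕ) := congrArg Subtype.val hxy
    obtain ⟨hx1, hx2, hx3⟩ := x.2
    obtain ⟨hy1, hy2, hy3⟩ := y.2
    have hx' : (x : ℕ × ℕ).2 ≤ n := by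
      have := congrArg Prod.snd hxy'
      simp only [bmul] at this; omega
    have hy' : (y : ℕ × ℕ).2 ≤ n := by
      have := congrArg Prod.snd hxy'
      simp only [bmul] at this; omega
    exact ⟨{x}, {y}, singleton_isOpen x hx', singleton_isOpen y hy', rfl, rfl, by
      rintro ⟨a, b⟩ ⟨ha, hb⟩
      simp only [Set.mem_singleton_iff] at ha hb
      subst ha; subst hb
      simpa using hxy⟩
  · -- U = V_s(w)
    rw [isOpen_prod_iff]
    rintro x y hxy
    simp only [Set.mem_preimage, Set.mem_setOf_eq] at hxy
    obtain ⟨t₀, ht₀⟩ := hxy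
    have h1 : (bmul (x : ℕ × ℕ) (y : ℕ × ℕ)).1 = (w : ℕ × ℕ).1 := by have := congrArg Prod.fst ht₀; exact this
    have h2 : (bmul (x : ℕ × ℕ) (y : ℕ × ℕ)).2 = (w : ℕ × ℕ).2 + p ^ s * t₀ := congrArg Prod.snd ht₀
    simp only [bmul] at h1 h2
    obtain ⟨hx1, hx2, hx3⟩ := x.2
    obtain ⟨hy1, hy2, hy3⟩ := y.2
    by_cases hxn : (x : ℕ × ℕ).2 ≤ n
    · by_cases hyn : (y : ℕ × ℕ).2 ≤ n
      · -- both isolated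
        refine ⟨{x}, {y}, singleton_isOpen x hxn, singleton_isOpen y hyn, rfl, rfl, ?_⟩
        rintro ⟨a, b⟩ ⟨ha, hb⟩
        simp only [Set.mem_singleton_iff] at ha hb
        subst ha; subst hb
        exact ⟨t₀, ht₀⟩
      · -- x isolated, y not
        push_neg at hyn
        refine ⟨{x}, _, singleton_isOpen x hxn, Vs_isOpen y s hs hyn, rfl,
          mem_Vs_self y s, ?_⟩
        rintro ⟨a, b⟩ ⟨ha, hb⟩
        simp only [Set.mem_singleton_iff, Set.mem_setOf_eq] at ha hb
        obtain ⟨u, hu⟩ := hb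
        refine ⟨t₀ + u, ?_⟩
        have ha1 : (a : ℕ × ℕ).1 = (x : ℕ × ℕ).1 := by rw [ha]
        have ha2 : (a : ℕ × ℕ).2 = (x : ℕ × ℕ).2 := by rw [ha]
        have hb1 : (b : ℕ × ℕ).1 = (y : ℕ × ℕ).1 := by rw [hu]
        have hb2 : (b : ℕ × ℕ).2 = (y : ℕ × ℕ).2 + p ^ s * u := by rw [hu]
        show (bmul (a : ℕ × ℕ) (b : ℕ × ℕ)) = ((w : ℕ × ℕ).1, (w : ℕ × ℕ).2 + p ^ s * (t₀ + u))
        have hd : p ^ s * (t₀ + u) = p ^ s * t₀ + p ^ s * u := Nat.mul_add _ _ _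
        simp only [bmul, Prod.ext_iff]
        constructor
        · simp only [ha1, ha2, hb1]; omega
        · simp only [ha1, ha2, hb1, hb2]; omega
    · -- x not isolated
      push_neg at hxn
      by_cases hyn : (y : ℕ × ℕ).2 ≤ n
      · refine ⟨_, {y}, Vs_isOpen x s hs hxn, singleton_isOpen y hyn,
          mem_Vs_self x s, rfl, ?_⟩
        rintro ⟨a, b⟩ ⟨ha, hb⟩
        simp only [Set.mem_singleton_iff, Set.mem_setOf_eq] at ha hb
        obtain ⟨u, hu⟩ := ha
        refine ⟨t₀ + u, ?_⟩
        have ha1 : (a : ℕ × ℕ).1 = (x : ℕ × ℕ).1 := by rw [hu]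
        have ha2 : (a : ℕ × ℕ).2 = (x : ℕ × ℕ).2 + p ^ s * u := by rw [hu]
        have hb1 : (b : ℕ × ℕ).1 = (y : ℕ × ℕ).1 := by rw [hb]
        have hb2 : (b : ℕ × ℕ).2 = (y : ℕ × ℕ).2 := by rw [hb]
        show (bmul (a : ℕ × ℕ) (b : ℕ × ℕ)) = ((w : ℕ × ℕ).1, (w : ℕ × ℕ).2 + p ^ s * (t₀ + u))
        have hd : p ^ s * (t₀ + u) = p ^ s * t₀ + p ^ s * u := Nat.mul_add _ _ _
        simp only [bmul, Prod.ext_iff]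
        constructor
        · simp only [ha1, ha2, hb1]; omega
        · simp only [ha1, ha2, hb1, hb2]; omega
      · push_neg at hyn
        refine ⟨_, _, Vs_isOpen x s hs hxn, Vs_isOpen y s hs hyn,
          mem_Vs_self x s, mem_Vs_self y s, ?_⟩
        rintro ⟨a, b⟩ ⟨ha, hb⟩
        simp only [Set.mem_setOf_eq] at ha hb
        obtain ⟨u, hu⟩ := ha
        obtain ⟨v, hv⟩ := hb
        refine ⟨t₀ + u + v, ?_⟩
        have ha1 : (a : ℕ × ℕ).1 = (x : ℕ × ℕ).1 := by rw [hu]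
        have ha2 : (a : ℕ × ℕ).2 = (x : ℕ × ℕ).2 + p ^ s * u := by rw [hu]
        have hb1 : (b : ℕ × ℕ).1 = (y : ℕ × ℕ).1 := by rw [hv]
        have hb2 : (b : ℕ × ℕ).2 = (y : ℕ × ℕ).2 + p ^ s * v := by rw [hv]
        show (bmul (a : ℕ × ℕ) (b : ℕ × ℕ)) = ((w : ℕ × ℕ).1, (w : ℕ × ℕ).2 + p ^ s * (t₀ + u + v))
        have hd : p ^ s * (t₀ + u + v) = p ^ s * t₀ + p ^ s * u + p ^ s * v := by ring
        simp only [bmul, Prod.ext_iff]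
        constructor
        · simp only [ha1, ha2, hb1]; omega
        · simp only [ha1, ha2, hb1, hb2]; omega
end

section
/- Let p be a prime and m ≤ n natural numbers. The topology τ_p^{m,n} on C₊^{[m,n]}(a,b) is Hausdorff and is not the discrete topology. -/
namespace TauPAux

/-- The basic sets `V_s(x)`. -/
def Vset (p m n s : ℕ) (x : Cmn m n) : Set (Cmn m n) :=
  {y : Cmn m n | ∃ t : ℕ, (y : ℕ × ℕ) = ((x : ℕ × ℕ).1, (x : ℕ × ℕ).2 + p ^ s * t)}

lemma mem_Vset_self (p m n s : ℕ) (x : Cmn m n) : x ∈ Vset p m n s x :=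
  ⟨0, by simp⟩

lemma isOpen_Vset (p m n s : ℕ) (hs : 1 ≤ s) (x : Cmn m n) (hx : n < (x : ℕ × ℕ).2) :
    @IsOpen _ (tauP p m n) (Vset p m n s x) :=
  TopologicalSpace.GenerateOpen.basic _ (Or.inr ⟨x, s, hs, hx, rfl⟩)

lemma isOpen_singleton (p m n : ℕ) (x : Cmn m n) (hx : (x : ℕ × ℕ).2 ≤ n) :
    @IsOpen _ (tauP p m n) {x} :=
  TopologicalSpace.GenerateOpen.basic _ (Or.inl ⟨x, hx, rfl⟩)

lemma arith (p a b t u : ℕ) (hp : 2 ≤ p) (hab : a ≠ b)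
    (h : a + p ^ (a + b) * t = b + p ^ (a + b) * u) : False := by
  have hP : a + b < p ^ (a + b) := by
    calc a + b < 2 ^ (a + b) := Nat.lt_two_pow_self
    _ ≤ p ^ (a + b) := Nat.pow_le_pow_left hp _
  rcases Nat.lt_trichotomy t u with h' | rfl | h'
  · obtain ⟨k, rfl⟩ := Nat.exists_eq_add_of_lt h'
    have hexp : p ^ (a + b) * (t + k + 1) = p ^ (a + b) * t + p ^ (a + b) * k + p ^ (a + b) := by
      ring
    rw [hexp] at h
    set X := p ^ (a + b) * t
    set Y := p ^ (a + b) * k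
    set P := p ^ (a + b)
    omega
  · omega
  · obtain ⟨k, rfl⟩ := Nat.exists_eq_add_of_lt h'
    have hexp : p ^ (a + b) * (u + k + 1) = p ^ (a + b) * u + p ^ (a + b) * k + p ^ (a + b) := by
      ring
    rw [hexp] at h
    set X := p ^ (a + b) * u
    set Y := p ^ (a + b) * k
    set P := p ^ (a + b)
    omega

end TauPAux

open TauPAux in
/-- For a prime `p` and `m ≤ n`, the topology `τ_p^{m,n}` on `C₊^{[m,n]}(a,b)` is
Hausdorff and non-discrete. -/
theorem tauP_t2Space_and_not_discrete (p m n : ℕ) (hp : p.Prime) (hmn : m ≤ n) :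
    @T2Space (Cmn m n) (tauP p m n) ∧ tauP p m n ≠ ⊥ := by
  have hp2 : 2 ≤ p := hp.two_le
  constructor
  · letI := tauP p m n
    constructor
    intro x y hxy
    rcases le_or_gt (x : ℕ × ℕ).2 n with hx | hx <;> rcases le_or_gt (y : ℕ × ℕ).2 n with hy | hy
    · exact ⟨{x}, {y}, isOpen_singleton p m n x hx, isOpen_singleton p m n y hy,
        rfl, rfl, Set.disjoint_singleton.mpr hxy⟩
    · refine ⟨{x}, Vset p m n 1 y, isOpen_singleton p m n x hx, isOpen_Vset p m n 1 le_rfl y hy,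
        rfl, mem_Vset_self p m n 1 y, Set.disjoint_left.mpr ?_⟩
      rintro z hz1 ⟨t, hz⟩
      rw [Set.mem_singleton_iff] at hz1
      subst hz1
      have h2 : (z : ℕ × ℕ).2 = (y : ℕ × ℕ).2 + p ^ 1 * t := by rw [hz]
      omega
    · refine ⟨Vset p m n 1 x, {y}, isOpen_Vset p m n 1 le_rfl x hx, isOpen_singleton p m n y hy,
        mem_Vset_self p m n 1 x, rfl, Set.disjoint_right.mpr ?_⟩
      rintro z hz1 ⟨t, hz⟩
      rw [Set.mem_singleton_iff] at hz1
      subst hz1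
      have h2 : (z : ℕ × ℕ).2 = (x : ℕ × ℕ).2 + p ^ 1 * t := by rw [hz]
      omega
    · by_cases h1 : (x : ℕ × ℕ).1 = (y : ℕ × ℕ).1
      · have h2 : (x : ℕ × ℕ).2 ≠ (y : ℕ × ℕ).2 := by
          intro h2
          exact hxy (Subtype.ext (Prod.ext h1 h2))
        set s := (x : ℕ × ℕ).2 + (y : ℕ × ℕ).2 with hs
        have hs1 : 1 ≤ s := by omega
        refine ⟨Vset p m n s x, Vset p m n s y, isOpen_Vset p m n s hs1 x hx,
          isOpen_Vset p m n s hs1 y hy, mem_Vset_self p m n s x, mem_Vset_self p m n s y,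
          Set.disjoint_left.mpr ?_⟩
        rintro z ⟨t, hzx⟩ ⟨u, hzy⟩
        have h3 : (x : ℕ × ℕ).2 + p ^ s * t = (y : ℕ × ℕ).2 + p ^ s * u := by
          have e1 : (z : ℕ × ℕ).2 = (x : ℕ × ℕ).2 + p ^ s * t := by rw [hzx]
          have e2 : (z : ℕ × ℕ).2 = (y : ℕ × ℕ).2 + p ^ s * u := by rw [hzy]
          omega
        exact arith p _ _ t u hp2 h2 h3
      · refine ⟨Vset p m n 1 x, Vset p m n 1 y, isOpen_Vset p m n 1 le_rfl x hx,
          isOpen_Vset p m n 1 le_rfl y hy, mem_Vset_self p m n 1 x, mem_Vset_self p m n 1 y,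
          Set.disjoint_left.mpr ?_⟩
        rintro z ⟨t, hzx⟩ ⟨u, hzy⟩
        apply h1
        have e1 : (z : ℕ × ℕ).1 = (x : ℕ × ℕ).1 := by rw [hzx]
        have e2 : (z : ℕ × ℕ).1 = (y : ℕ × ℕ).1 := by rw [hzy]
        omega
  · intro hbot
    -- the point (n, n+1)
    set x0 : Cmn m n := ⟨(n, n + 1), ⟨hmn, le_rfl, by omega⟩⟩ with hx0
    -- key: every open set containing x0 contains some V_s(x0)
    have key : ∀ U : Set (Cmn m n), @IsOpen _ (tauP p m n) U → x0 ∈ U →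
        ∃ s : ℕ, 1 ≤ s ∧ Vset p m n s x0 ⊆ U := by
      intro U hU
      induction hU with
      | basic V hV =>
        intro hxV
        rcases hV with ⟨z, hz, rfl⟩ | ⟨z, s, hs, _, rfl⟩
        · rcases hxV with rfl
          simp only [hx0] at hz
          omega
        · obtain ⟨t0, ht0⟩ := hxV
          refine ⟨s, hs, ?_⟩
          rintro y ⟨u, hu⟩
          refine ⟨t0 + u, ?_⟩
          rw [hu, ht0]
          simp [mul_add]
          ring
      | univ => exact fun _ => ⟨1, le_rfl, Set.subset_univ _⟩
      | inter V W _ _ ihV ihW =>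
        rintro ⟨hxV, hxW⟩
        obtain ⟨s1, hs1, h1⟩ := ihV hxV
        obtain ⟨s2, hs2, h2⟩ := ihW hxW
        refine ⟨s1 + s2, by omega, fun y hy => ?_⟩
        obtain ⟨t, ht⟩ := hy
        constructor
        · exact h1 ⟨p ^ s2 * t, by rw [ht]; rw [pow_add]; ring_nf⟩
        · exact h2 ⟨p ^ s1 * t, by rw [ht]; rw [pow_add]; ring_nf⟩
      | sUnion S _ ihS =>
        rintro ⟨V, hVS, hxV⟩
        obtain ⟨s, hs, h⟩ := ihS V hVS hxV
        exact ⟨s, hs, h.trans (Set.subset_sUnion_of_mem hVS)⟩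
    have hopen : @IsOpen _ (tauP p m n) {x0} := by
      rw [hbot]
      exact @isOpen_discrete _ ⊥ (discreteTopology_bot _) {x0}
    obtain ⟨s, hs, hsub⟩ := key {x0} hopen rfl
    have hy : (⟨(n, n + 1 + p ^ s * 1), ⟨hmn, le_rfl, by omega⟩⟩ : Cmn m n) ∈ Vset p m n s x0 :=
      ⟨1, rfl⟩
    have := hsub hy
    rw [Set.mem_singleton_iff] at this
    have h2 : n + 1 + p ^ s * 1 = n + 1 := by
      have := congrArg Subtype.val this
      simp only [hx0] at this
      exact congrArg Prod.snd this
    have hps : 1 ≤ p ^ s := Nat.one_le_pow _ _ (by omega)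
    omega
end

section
/- Let S be a subsemigroup of the bicyclic monoid and suppose (i,j) ∈ S and (j,i) ∈ S for some i < j. Then for every positive integer n the idempotent (i + n(j−i), i + n(j−i)) belongs to S; in particular S contains infinitely many idempotents. -/
/-- If a subsemigroup `S` of the bicyclic monoid contains `(i,j)` and `(j,i)` with
`i < j`, then for every `n ≥ 1` the idempotent `(i + n(j−i), i + n(j−i))` belongs to
`S`; in particular `S` contains infinitely many idempotents. -/
theorem idempotents_infinite_of_mem_inv_mem
    (S : Set (ℕ × ℕ)) (hS : ∀ x ∈ S, ∀ y ∈ S, bmul x y ∈ S)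
    (i j : ℕ) (hij : i < j) (h₁ : (i, j) ∈ S) (h₂ : (j, i) ∈ S) :
    (∀ n : ℕ, 1 ≤ n → (i + n * (j - i), i + n * (j - i)) ∈ S) ∧
    {k : ℕ | (k, k) ∈ S}.Infinite := by
  have hA : ∀ n : ℕ, 1 ≤ n → (i + n * (j - i), i) ∈ S := by
    intro n hn
    induction n with
    | zero => omega
    | succ m ih =>
      rcases Nat.eq_or_lt_of_le hn with h | h
      · have hm0 : m = 0 := by omega
        subst hm0
        have e : i + (0 + 1) * (j - i) = j := by omega
        rw [e]; exact h₂
      · have hm : 1 ≤ m := by omega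
        have := hS _ h₂ _ (ih hm)
        have heq : bmul (j, i) (i + m * (j - i), i) = (i + (m + 1) * (j - i), i) := by
          simp only [bmul]
          have : min i (i + m * (j - i)) = i := by omega
          rw [this]
          have hmul : (m + 1) * (j - i) = m * (j - i) + (j - i) := by ring
          rw [Prod.mk.injEq]; constructor <;> omega
        rwa [heq] at this
  have hB : ∀ n : ℕ, 1 ≤ n → (i, i + n * (j - i)) ∈ S := by
    intro n hn
    induction n with
    | zero => omega
    | succ m ih =>
      rcases Nat.eq_or_lt_of_le hn with h | h
      · have hm0 : m = 0 := by omega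
        subst hm0
        have e : i + (0 + 1) * (j - i) = j := by omega
        rw [e]; exact h₁
      · have hm : 1 ≤ m := by omega
        have := hS _ (ih hm) _ h₁
        have heq : bmul (i, i + m * (j - i)) (i, j) = (i, i + (m + 1) * (j - i)) := by
          simp only [bmul]
          have : min (i + m * (j - i)) i = i := by omega
          rw [this]
          have hmul : (m + 1) * (j - i) = m * (j - i) + (j - i) := by ring
          rw [Prod.mk.injEq]; constructor <;> omega
        rwa [heq] at this
  have hE : ∀ n : ℕ, 1 ≤ n → (i + n * (j - i), i + n * (j - i)) ∈ S := by
    intro n hn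
    have := hS _ (hA n hn) _ (hB n hn)
    have heq : bmul (i + n * (j - i), i) (i, i + n * (j - i))
        = (i + n * (j - i), i + n * (j - i)) := by
      simp only [bmul, min_self]
      rw [Prod.mk.injEq]; constructor <;> omega
    rwa [heq] at this
  refine ⟨hE, ?_⟩
  apply Set.infinite_of_injective_forall_mem (f := fun n : ℕ => i + (n + 1) * (j - i))
  · intro a b hab
    simp only at hab
    have h' : (a + 1) * (j - i) = (b + 1) * (j - i) := by omega
    have := Nat.eq_of_mul_eq_mul_right (Nat.sub_pos_of_lt hij) h'
    omega
  · intro n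
    exact hE (n + 1) (by omega)
end

section
/- Let S be a subsemigroup of the bicyclic monoid containing an element (i, i+k) with k ≥ 1 and an element (j+l, j) with l ≥ 1. Then for every positive integer t the idempotent (max(i,j) + k·l·t, max(i,j) + k·l·t) belongs to S; in particular the set of idempotents of S is infinite. -/
/-- If a subsemigroup `S` of the bicyclic monoid contains an element `(i, i+k)` with
`k ≥ 1` and an element `(j+l, j)` with `l ≥ 1`, then for every `t ≥ 1` the idempotent
`(max(i,j) + k·l·t, max(i,j) + k·l·t)` belongs to `S`; in particular `S` contains
infinitely many idempotents. -/
theorem idempotents_infinite_of_mem_Cplus_and_mem_Cminus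
    (S : Set (ℕ × ℕ)) (hS : ∀ x ∈ S, ∀ y ∈ S, bmul x y ∈ S)
    (i k j l : ℕ) (hk : 1 ≤ k) (hl : 1 ≤ l)
    (h₁ : (i, i + k) ∈ S) (h₂ : (j + l, j) ∈ S) :
    (∀ t : ℕ, 1 ≤ t → (max i j + k * l * t, max i j + k * l * t) ∈ S) ∧
    {x : ℕ | (x, x) ∈ S}.Infinite := by
  have pa : ∀ n : ℕ, (i, i + k * (n + 1)) ∈ S := by
    intro n
    induction n with
    | zero => simpa using h₁
    | succ n ih =>
      have h := hS _ h₁ _ ih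
      have he : bmul (i, i + k) (i, i + k * (n + 1)) = (i, i + k * (n + 2)) := by
        have hx : k * (n + 2) = k * (n + 1) + k := by ring
        simp only [bmul, Prod.mk.injEq]
        rw [hx]
        generalize k * (n + 1) = m
        omega
      rwa [he] at h
  have pb : ∀ n : ℕ, (j + l * (n + 1), j) ∈ S := by
    intro n
    induction n with
    | zero => simpa using h₂
    | succ n ih =>
      have h := hS _ h₂ _ ih
      have he : bmul (j + l, j) (j + l * (n + 1), j) = (j + l * (n + 2), j) := by
        have hx : l * (n + 2) = l * (n + 1) + l := by ring
        simp only [bmul, Prod.mk.injEq]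
        rw [hx]
        generalize l * (n + 1) = m
        omega
      rwa [he] at h
  have pa' : ∀ n : ℕ, 1 ≤ n → (i, i + k * n) ∈ S := by
    intro n hn
    obtain ⟨m, rfl⟩ : ∃ m, n = m + 1 := ⟨n - 1, by omega⟩
    exact pa m
  have pb' : ∀ n : ℕ, 1 ≤ n → (j + l * n, j) ∈ S := by
    intro n hn
    obtain ⟨m, rfl⟩ : ∃ m, n = m + 1 := ⟨n - 1, by omega⟩
    exact pb m
  have key : ∀ t : ℕ, 1 ≤ t → (max i j + k * l * t, max i j + k * l * t) ∈ S := by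
    intro t ht
    have ha := pa' (l * t) (Nat.mul_le_mul hl ht)
    have hb := pb' (k * t) (Nat.mul_le_mul hk ht)
    have h := hS _ hb _ ha
    have hm1 : l * (k * t) = k * l * t := by ring
    have hm2 : k * (l * t) = k * l * t := by ring
    rw [hm1] at hb h
    rw [hm2] at ha h
    have he : bmul (j + k * l * t, j) (i, i + k * l * t)
        = (max i j + k * l * t, max i j + k * l * t) := by
      simp only [bmul, Prod.mk.injEq]
      generalize k * l * t = M
      omega
    rwa [he] at h
  refine ⟨key, ?_⟩
  have hkl : 1 ≤ k * l := Nat.mul_le_mul hk hl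
  refine Set.infinite_of_injective_forall_mem
    (f := fun n : ℕ => max i j + k * l * (n + 1)) ?_ ?_
  · intro a b hab
    simp only at hab
    have h1 : k * l * (a + 1) = k * l * (b + 1) := by omega
    have h2 := Nat.eq_of_mul_eq_mul_left (by omega : 0 < k * l) h1
    omega
  · intro n
    exact key (n + 1) (by omega)
end

section
/- Let S be a subsemigroup of the bicyclic monoid and let n ∈ ℕ, with e = (n,n). Then S \ (S·e ∪ e·S) = {(k,l) ∈ S : k < n and l < n}; in particular this set is finite. -/
/-- For a subsemigroup `S` of the bicyclic monoid and the idempotent `e = (n,n)`, the set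
`S \ (S·e ∪ e·S)` equals `{(k,l) ∈ S : k < n and l < n}`; in particular it is finite. -/
theorem diff_translates_eq_and_finite
    (S : Set (ℕ × ℕ)) (hS : ∀ x ∈ S, ∀ y ∈ S, bmul x y ∈ S) (n : ℕ) :
    S \ ((fun s => bmul s (n, n)) '' S ∪ (fun s => bmul (n, n) s) '' S) =
      {x ∈ S | x.1 < n ∧ x.2 < n} ∧
    (S \ ((fun s => bmul s (n, n)) '' S ∪ (fun s => bmul (n, n) s) '' S)).Finite := by
  have heq : S \ ((fun s => bmul s (n, n)) '' S ∪ (fun s => bmul (n, n) s) '' S) =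
      {x ∈ S | x.1 < n ∧ x.2 < n} := by
    ext x
    simp only [Set.mem_diff, Set.mem_union, Set.mem_image, Set.mem_setOf_eq, not_or, not_exists,
      not_and, bmul]
    constructor
    · rintro ⟨hx, h1, h2⟩
      refine ⟨hx, ?_, ?_⟩
      · by_contra h
        push_neg at h
        have := h2 x hx
        apply this
        have : min n x.1 = n := min_eq_left h
        rw [this]
        simp [Prod.ext_iff]
      · by_contra h
        push_neg at h
        have := h1 x hx
        apply this
        have : min x.2 n = n := min_eq_right h
        rw [this]
        simp [Prod.ext_iff]
    · rintro ⟨hx, h1, h2⟩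
      refine ⟨hx, fun s hs heq => ?_, fun s hs heq => ?_⟩
      · have : x.2 = n + s.2 - min s.2 n := by rw [← heq]
        omega
      · have : x.1 = n + s.1 - min n s.1 := by rw [← heq]
        omega
  refine ⟨heq, ?_⟩
  rw [heq]
  apply Set.Finite.subset (Set.finite_Iio (n, n) (α := ℕ × ℕ) |>.union (Set.finite_Iio n |>.prod (Set.finite_Iio n)))
  intro x hx
  right
  exact ⟨hx.2.1, hx.2.2⟩
end
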